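/- arXiv:2008.03159 — 12 statements merged into one kernel-verified Lean document; each statement's English description precedes it below -/
import Mathlib

section
/- If α, β, γ are cofinite partial isometries of ℤ (with the usual metric) and α = β∘γ, then max(|ℤ∖dom β|, |ℤ∖dom γ|) ≤ |ℤ∖dom α| ≤ |ℤ∖dom β| + |ℤ∖dom γ|. -/
/-- A cofinite partial isometry of ℤ with the usual metric: an injective partial map
with cofinite domain and range preserving distances on its domain. -/
def CofIso (f : ℤ →. ℤ) : Prop :=
  f.Domᶜ.Finite ∧ f.ranᶜ.Finite ∧
  (∀ ⦃x y x' y'⦄, x' ∈ f x → y' ∈ f y → x' = y' → x = y) ∧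
  (∀ ⦃x y x' y'⦄, x' ∈ f x → y' ∈ f y → |x' - y'| = |x - y|)

lemma cofIso_affine {f : ℤ →. ℤ} (hf : CofIso f) :
    ∃ ε c : ℤ, (ε = 1 ∨ ε = -1) ∧ ∀ ⦃x y⦄, y ∈ f x → y = ε * x + c := by
  obtain ⟨h1, -, -, h4⟩ := hf
  obtain ⟨N, hN⟩ := h1.bddAbove
  have ha : (N + 1) ∈ f.Dom := by
    by_contra hx; exact by have := hN hx; omega
  have hb : (N + 2) ∈ f.Dom := by
    by_contra hx; exact by have := hN hx; omega
  obtain ⟨u, hu⟩ := (Part.dom_iff_mem).mp ha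
  obtain ⟨v, hv⟩ := (Part.dom_iff_mem).mp hb
  have huv : |u - v| = |(N+1 : ℤ) - (N+2)| := h4 hu hv
  have hε : v = u + 1 ∨ v = u - 1 := by
    rw [abs_eq_abs] at huv; omega
  rcases hε with hc | hc
  · refine ⟨1, u - (N + 1), Or.inl rfl, ?_⟩
    intro x y hy
    have e1 : |y - u| = |x - (N+1)| := h4 hy hu
    have e2 : |y - v| = |x - (N+2)| := h4 hy hv
    rw [abs_eq_abs] at e1 e2
    omega
  · refine ⟨-1, u + (N + 1), Or.inr rfl, ?_⟩
    intro x y hy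
    have e1 : |y - u| = |x - (N+1)| := h4 hy hu
    have e2 : |y - v| = |x - (N+2)| := h4 hy hv
    rw [abs_eq_abs] at e1 e2
    omega

lemma cofIso_ncard {f : ℤ →. ℤ} (hf : CofIso f) :
    f.ranᶜ.ncard = f.Domᶜ.ncard := by
  obtain ⟨ε, c, hε, hfc⟩ := cofIso_affine hf
  have hinv : ∀ x : ℤ, ε * (ε * x + c - c) = x := by
    intro x; rcases hε with h | h <;> subst h <;> ring
  have hbij : Function.Bijective (fun x : ℤ => ε * x + c) := by
    refine ⟨fun a b hab => ?_, fun y => ⟨ε * (y - c), ?_⟩⟩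
    · have := hinv a; have := hinv b; simp only at hab; rcases hε with h | h <;> subst h <;> omega
    · rcases hε with h | h <;> subst h <;> ring
  have hran : f.ran = (fun x : ℤ => ε * x + c) '' f.Dom := by
    ext y
    constructor
    · rintro ⟨x, hx⟩
      exact ⟨x, Part.dom_iff_mem.mpr ⟨y, hx⟩, (hfc hx).symm⟩
    · rintro ⟨x, hx, rfl⟩
      obtain ⟨z, hz⟩ := Part.dom_iff_mem.mp hx
      have := hfc hz
      exact ⟨x, show ε * x + c ∈ f x by rwa [← this]⟩
  rw [hran, ← Set.image_compl_eq hbij, Set.ncard_image_of_injective _ hbij.1]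


/-- If α = βγ (apply β first, then γ) in the monoid of cofinite partial isometries of ℤ,
then max(|ℤ∖dom β|, |ℤ∖dom γ|) ≤ |ℤ∖dom α| ≤ |ℤ∖dom β| + |ℤ∖dom γ|. -/
theorem stmt_0 (α β γ : ℤ →. ℤ) (hα : CofIso α) (hβ : CofIso β) (hγ : CofIso γ)
    (h : α = γ.comp β) :
    max β.Domᶜ.ncard γ.Domᶜ.ncard ≤ α.Domᶜ.ncard ∧
      α.Domᶜ.ncard ≤ β.Domᶜ.ncard + γ.Domᶜ.ncard := by
  have hmem : ∀ x z, z ∈ α x ↔ ∃ y, y ∈ β x ∧ z ∈ γ y := by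
    intro x z; rw [h, PFun.comp_apply]; exact Part.mem_bind_iff
  -- β.Domᶜ ⊆ α.Domᶜ
  have hsub : β.Domᶜ ⊆ α.Domᶜ := by
    intro x hx hxa
    obtain ⟨z, hz⟩ := Part.dom_iff_mem.mp hxa
    obtain ⟨y, hy, -⟩ := (hmem x z).mp hz
    exact hx (Part.dom_iff_mem.mpr ⟨y, hy⟩)
  have hβle : β.Domᶜ.ncard ≤ α.Domᶜ.ncard := Set.ncard_le_ncard hsub hα.1
  -- ran α ⊆ ran γ
  have hransub : γ.ranᶜ ⊆ α.ranᶜ := by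
    intro z hz ⟨x, hx⟩
    obtain ⟨y, -, hzy⟩ := (hmem x z).mp hx
    exact hz ⟨y, hzy⟩
  have hγle : γ.Domᶜ.ncard ≤ α.Domᶜ.ncard := by
    rw [← cofIso_ncard hγ, ← cofIso_ncard hα]
    exact Set.ncard_le_ncard hransub hα.2.1
  refine ⟨max_le hβle hγle, ?_⟩
  -- upper bound
  obtain ⟨ε, c, hε, hfc⟩ := cofIso_affine hβ
  have hcover : α.Domᶜ ⊆ β.Domᶜ ∪ (fun z : ℤ => ε * (z - c)) '' γ.Domᶜ := by
    intro x hx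
    by_cases hxb : x ∈ β.Dom
    · right
      obtain ⟨y, hy⟩ := Part.dom_iff_mem.mp hxb
      have hyv := hfc hy
      refine ⟨y, fun hyd => ?_, ?_⟩
      · obtain ⟨z, hz⟩ := Part.dom_iff_mem.mp hyd
        exact hx (Part.dom_iff_mem.mpr ⟨z, (hmem x z).mpr ⟨y, hy, hz⟩⟩)
      · show ε * (y - c) = x; rcases hε with h | h <;> subst h <;> omega
    · exact Or.inl hxb
  calc α.Domᶜ.ncard ≤ (β.Domᶜ ∪ (fun z : ℤ => ε * (z - c)) '' γ.Domᶜ).ncard :=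
        Set.ncard_le_ncard hcover (hβ.1.union (hγ.1.image _))
    _ ≤ β.Domᶜ.ncard + ((fun z : ℤ => ε * (z - c)) '' γ.Domᶜ).ncard := Set.ncard_union_le _ _
    _ ≤ β.Domᶜ.ncard + γ.Domᶜ.ncard := by
        exact Nat.add_le_add_left (Set.ncard_image_le hγ.1) _
end

section
/- For every cofinite partial isometry α of ℤ, the complement ℤ∖dom α and the complement ℤ∖ran α have the same (finite) cardinality. -/
lemma cofiso_aux (α : ℤ →. ℤ)
    (hiso : ∀ ⦃x y x' y'⦄, x' ∈ α x → y' ∈ α y → |x' - y'| = |x - y|)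
    {a b fa fb ε : ℤ} (hab : a ≠ b) (ha : fa ∈ α a) (hb : fb ∈ α b)
    (hε : ε * ε = 1) (hfb : fb - fa = ε * (b - a)) :
    ∀ x y, y ∈ α x → y = ε * (x - a) + fa := by
  intro x y hy
  have h1 : |y - fa| = |x - a| := hiso hy ha
  have h2 : |y - fb| = |x - b| := hiso hy hb
  have e1 : (y - fa) ^ 2 = (x - a) ^ 2 := by rw [← sq_abs, h1, sq_abs]
  have e2 : (y - fb) ^ 2 = (x - b) ^ 2 := by rw [← sq_abs, h2, sq_abs]
  have hεne : ε ≠ 0 := by rintro rfl; simp at hε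
  have hba : b - a ≠ 0 := sub_ne_zero.mpr (Ne.symm hab)
  have hfb' : fb = fa + ε * (b - a) := by linarith
  subst hfb'
  have key : (2 * ε * (b - a)) * (y - fa - ε * (x - a)) = 0 := by
    linear_combination e1 - e2 + ((b - a) ^ 2 - 2 * (x - a) * (b - a)) * hε
  have h2e : (2 * ε * (b - a)) ≠ 0 := by
    exact mul_ne_zero (mul_ne_zero two_ne_zero hεne) hba
  have := (mul_eq_zero.mp key).resolve_left h2e
  linarith

/-- For every cofinite partial isometry α of ℤ, the complements of the domain and the
range are finite and have the same cardinality. -/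
theorem stmt_1 (α : ℤ →. ℤ) (hα : CofIso α) :
    α.Domᶜ.Finite ∧ α.ranᶜ.Finite ∧ α.Domᶜ.ncard = α.ranᶜ.ncard := by
  obtain ⟨hd, hr, hinj, hiso⟩ := hα
  refine ⟨hd, hr, ?_⟩
  have hD : α.Dom.Infinite := by
    have := hd.infinite_compl
    rwa [compl_compl] at this
  obtain ⟨a, ha, b, hb, hab⟩ := hD.nontrivial
  set fa := (α a).get ha with hfa
  set fb := (α b).get hb with hfbdef
  have hamem : fa ∈ α a := Part.get_mem ha
  have hbmem : fb ∈ α b := Part.get_mem hb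
  have habs : |fb - fa| = |b - a| := hiso hbmem hamem
  have : ∃ ε : ℤ, ε * ε = 1 ∧ fb - fa = ε * (b - a) := by
    rcases abs_eq_abs.mp habs with h | h
    · exact ⟨1, by ring, by linarith⟩
    · exact ⟨-1, by ring, by linarith⟩
  obtain ⟨ε, hε, hfb⟩ := this
  have key := cofiso_aux α hiso hab hamem hbmem hε hfb
  set g : ℤ → ℤ := fun x => ε * (x - a) + fa with hg
  have hgbij : Function.Bijective g := by
    constructor
    · intro u v huv
      have : ε * (u - a) = ε * (v - a) := by
        simpa [hg] using huv
      have hεne : ε ≠ 0 := by rintro rfl; simp at hε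
      have := mul_left_cancel₀ hεne this
      linarith
    · intro y
      refine ⟨ε * (y - fa) + a, ?_⟩
      simp only [hg]
      linear_combination (y - fa) * hε
  have hran : α.ran = g '' α.Dom := by
    ext y
    constructor
    · rintro ⟨x, hx⟩
      exact ⟨x, Part.dom_iff_mem.mpr ⟨y, hx⟩, (key x y hx).symm⟩
    · rintro ⟨x, hx, rfl⟩
      have hm : (α x).get hx ∈ α x := Part.get_mem hx
      have hgx : g x = (α x).get hx := (key x _ hm).symm
      rw [hgx]
      exact ⟨x, hm⟩
  rw [hran, ← Set.image_compl_eq hgbij]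
  exact (Set.ncard_image_of_injective _ hgbij.1).symm
end

section
/- The monoid ID∞ of all cofinite partial isometries of ℤ contains no subsemigroup isomorphic to the bicyclic monoid. -/
/-- Multiplication of the bicyclic monoid on pairs: (k,l) stands for q^k p^l and
(q^k p^l)(q^m p^n) = q^{k+m−min(l,m)} p^{l+n−min(l,m)}. -/
def bmul : ℕ × ℕ → ℕ × ℕ → ℕ × ℕ
  | (k, l), (m, n) => (k + m - min l m, l + n - min l m)

/-- Membership in a composition of partial functions. -/
lemma mem_comp' {f g : ℤ →. ℤ} {x z : ℤ} :
    z ∈ (f.comp g) x ↔ ∃ y, y ∈ g x ∧ z ∈ f y := by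
  simp [PFun.comp_apply, Part.mem_bind_iff]
  exact Part.mem_bind_iff

/-- Every cofinite partial isometry of ℤ is the restriction of a global isometry. -/
lemma affine {α : ℤ →. ℤ} (h : CofIso α) :
    ∃ g : ℤ → ℤ, Function.Bijective g ∧ ∀ x y, y ∈ α x → y = g x := by
  obtain ⟨hd, -, -, hiso⟩ := h
  have hinf : α.Dom.Infinite := by simpa using hd.infinite_compl
  obtain ⟨x0, hx0⟩ := hinf.nonempty
  obtain ⟨x1, hx1d, hne⟩ := (hinf.diff (Set.finite_singleton x0)).nonempty
  have hne' : x1 ≠ x0 := by simpa using hne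
  obtain ⟨y0, hy0⟩ := (PFun.mem_dom α x0).1 hx0
  obtain ⟨y1, hy1⟩ := (PFun.mem_dom α x1).1 hx1d
  have key : |y1 - y0| = |x1 - x0| := hiso hy1 hy0
  obtain ⟨ε, hε1, hεv⟩ : ∃ ε : ℤ, (ε = 1 ∨ ε = -1) ∧ y1 - y0 = ε * (x1 - x0) := by
    rcases abs_eq_abs.mp key with h | h
    exacts [⟨1, Or.inl rfl, by linarith⟩, ⟨-1, Or.inr rfl, by linarith⟩]
  refine ⟨fun z => ε * (z - x0) + y0, ⟨?_, ?_⟩, ?_⟩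
  · intro u v huv
    simp only at huv
    rcases hε1 with rfl | rfl <;> omega
  · intro w
    refine ⟨ε * (w - y0) + x0, ?_⟩
    rcases hε1 with rfl | rfl <;> ring_nf
  · intro z w hw
    have h1 : |w - y0| = |z - x0| := hiso hw hy0
    have h2 : |w - y1| = |z - x1| := hiso hw hy1
    simp only
    rcases abs_eq_abs.mp h1 with A | A <;> rcases abs_eq_abs.mp h2 with B | B <;>
      rcases hε1 with rfl | rfl <;> omega

/-- The monoid ID∞ of all cofinite partial isometries of ℤ (under composition of partial
maps, first map applied first) contains no subsemigroup isomorphic to the bicyclic monoid: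
there is no injective multiplicative map from the bicyclic monoid into ID∞. -/
theorem stmt_2 :
    ¬ ∃ φ : ℕ × ℕ → (ℤ →. ℤ),
      (∀ p, CofIso (φ p)) ∧ Function.Injective φ ∧
      ∀ p q, φ (bmul p q) = (φ q).comp (φ p) := by
  rintro ⟨φ, hcof, hinj, hmul⟩
  set e := φ (0, 0) with he_def
  set a := φ (0, 1) with ha_def
  set b := φ (1, 0) with hb_def
  set f := φ (1, 1) with hf_def
  have H1 : e = b.comp a := by
    have h := hmul (0, 1) (1, 0); rwa [show bmul (0, 1) (1, 0) = (0, 0) from by decide] at h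
  have H2 : f = a.comp b := by
    have h := hmul (1, 0) (0, 1); rwa [show bmul (1, 0) (0, 1) = (1, 1) from by decide] at h
  have H3 : a = a.comp e := by
    have h := hmul (0, 0) (0, 1); rwa [show bmul (0, 0) (0, 1) = (0, 1) from by decide] at h
  have H4 : b = e.comp b := by
    have h := hmul (1, 0) (0, 0); rwa [show bmul (1, 0) (0, 0) = (1, 0) from by decide] at h
  have H5 : e = e.comp e := by
    have h := hmul (0, 0) (0, 0); rwa [show bmul (0, 0) (0, 0) = (0, 0) from by decide] at h
  have H6 : f = f.comp e := by
    have h := hmul (0, 0) (1, 1); rwa [show bmul (0, 0) (1, 1) = (1, 1) from by decide] at h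
  have binj := (hcof (1, 0)).2.2.1
  have einj := (hcof (0, 0)).2.2.1
  -- e is (a restriction of) the identity
  have De : ∀ ⦃x y⦄, y ∈ e x → y = x := by
    intro x y hxy
    obtain ⟨z, hz1, hz2⟩ := mem_comp'.1 (H5 ▸ hxy)
    obtain rfl : z = y := Part.mem_unique hz1 hxy
    exact (einj hxy hz2 rfl).symm
  -- b inverts a
  have D4 : ∀ ⦃x y⦄, y ∈ a x → x ∈ b y := by
    intro x y hxy
    obtain ⟨z, hz1, hz2⟩ := mem_comp'.1 (H3 ▸ hxy)
    obtain rfl : z = x := De hz1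
    obtain ⟨w, hw1, hw2⟩ := mem_comp'.1 (H1 ▸ hz1)
    obtain rfl : w = y := Part.mem_unique hw1 hxy
    exact hw2
  -- f is (a restriction of) the identity
  have Fid : ∀ ⦃x y⦄, y ∈ f x → y = x := by
    intro x y hxy
    obtain ⟨z, hz1, hz2⟩ := mem_comp'.1 (H2 ▸ hxy)
    exact (binj hz1 (D4 hz2) rfl).symm
  -- any value of b is in the domain of a
  have Hb : ∀ ⦃x w⦄, w ∈ b x → w ∈ a.Dom := by
    intro x w hw
    obtain ⟨z, hz1, hz2⟩ := mem_comp'.1 (H4 ▸ hw)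
    have hzw : z = w := Part.mem_unique hz1 hw
    rw [hzw] at hz2
    have : w ∈ e.Dom := (PFun.mem_dom e w).2 ⟨w, hz2⟩
    obtain ⟨y, hy⟩ := (PFun.mem_dom e w).1 this
    obtain ⟨u, hu1, _⟩ := mem_comp'.1 (H1 ▸ hy)
    exact (PFun.mem_dom a w).2 ⟨u, hu1⟩
  have F2 : f.Dom ⊆ e.Dom := by
    intro x hx
    obtain ⟨y, hy⟩ := (PFun.mem_dom f x).1 hx
    obtain ⟨z, hz1, _⟩ := mem_comp'.1 (H6 ▸ hy)
    exact (PFun.mem_dom e x).2 ⟨z, hz1⟩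
  have Dea : e.Dom = a.Dom := by
    ext x
    constructor
    · intro hx
      obtain ⟨y, hy⟩ := (PFun.mem_dom e x).1 hx
      obtain ⟨z, hz1, _⟩ := mem_comp'.1 (H1 ▸ hy)
      exact (PFun.mem_dom a x).2 ⟨z, hz1⟩
    · intro hx
      obtain ⟨y, hy⟩ := (PFun.mem_dom a x).1 hx
      obtain ⟨z, hz1, _⟩ := mem_comp'.1 (H3 ▸ hy)
      exact (PFun.mem_dom e x).2 ⟨z, hz1⟩
  have Dfb : f.Dom = b.Dom := by
    ext y
    constructor
    · intro hy
      obtain ⟨w, hw⟩ := (PFun.mem_dom f y).1 hy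
      obtain ⟨z, hz1, _⟩ := mem_comp'.1 (H2 ▸ hw)
      exact (PFun.mem_dom b y).2 ⟨z, hz1⟩
    · intro hy
      obtain ⟨w, hw⟩ := (PFun.mem_dom b y).1 hy
      obtain ⟨u, hu⟩ := (PFun.mem_dom a w).1 (Hb hw)
      have : u ∈ f y := H2 ▸ mem_comp'.2 ⟨w, hw, hu⟩
      exact (PFun.mem_dom f y).2 ⟨u, this⟩
  have Rab : a.ran = b.Dom := by
    ext y
    constructor
    · rintro ⟨x, hx⟩
      exact (PFun.mem_dom b y).2 ⟨x, D4 hx⟩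
    · intro hy
      obtain ⟨w, hw⟩ := (PFun.mem_dom b y).1 hy
      obtain ⟨u, hu⟩ := (PFun.mem_dom a w).1 (Hb hw)
      obtain rfl : y = u := binj hw (D4 hu) rfl
      exact ⟨w, hu⟩
  -- cardinality argument
  obtain ⟨g, hgbij, hgval⟩ := affine (hcof (0, 1))
  have hgdom : a.ran = g '' a.Dom := by
    ext y
    constructor
    · rintro ⟨x, hx⟩
      exact ⟨x, (PFun.mem_dom a x).2 ⟨y, hx⟩, (hgval _ _ hx).symm⟩
    · rintro ⟨x, hx, rfl⟩
      obtain ⟨y, hy⟩ := (PFun.mem_dom a x).1 hx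
      exact ⟨x, hgval _ _ hy ▸ hy⟩
  have hcompl : b.Domᶜ = g '' a.Domᶜ := by
    rw [← Rab, hgdom, ← Set.image_compl_eq hgbij]
  have hcard : f.Domᶜ.ncard = e.Domᶜ.ncard := by
    rw [Dfb, hcompl, Dea, Set.ncard_image_of_injective _ hgbij.injective]
  have hsub : e.Domᶜ ⊆ f.Domᶜ := Set.compl_subset_compl.2 F2
  have heq : e.Domᶜ = f.Domᶜ :=
    Set.eq_of_subset_of_ncard_le hsub (le_of_eq hcard) (hcof (1, 1)).1
  have hdom : e.Dom = f.Dom := by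
    rw [← compl_compl e.Dom, heq, compl_compl]
  have hef : e = f := by
    apply PFun.ext
    intro x y
    constructor
    · intro h
      have hyx : y = x := De h
      have hx : x ∈ f.Dom := hdom ▸ (PFun.mem_dom e x).2 ⟨y, h⟩
      obtain ⟨z, hz⟩ := (PFun.mem_dom f x).1 hx
      have : x ∈ f x := Fid hz ▸ hz
      rwa [hyx]
    · intro h
      have hyx : y = x := Fid h
      have hx : x ∈ e.Dom := hdom.symm ▸ (PFun.mem_dom f x).2 ⟨y, h⟩
      obtain ⟨z, hz⟩ := (PFun.mem_dom e x).1 hx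
      have : x ∈ e x := De hz ▸ hz
      rwa [hyx]
  have := hinj hef
  simp at this
end

section
/- There is no injective monoid (or even semigroup) homomorphism from the monoid IN∞ of all cofinite partial isometries of ℕ into the monoid ID∞ of all cofinite partial isometries of ℤ. -/
/-- A cofinite partial isometry of ℕ with the usual metric. -/
def CofIsoN (f : ℕ →. ℕ) : Prop :=
  f.Domᶜ.Finite ∧ f.ranᶜ.Finite ∧
  (∀ ⦃x y x' y'⦄, x' ∈ f x → y' ∈ f y → x' = y' → x = y) ∧
  (∀ ⦃x y x' y'⦄, x' ∈ f x → y' ∈ f y → |(x' : ℤ) - (y' : ℤ)| = |(x : ℤ) - (y : ℤ)|)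

namespace StmtAux

/-- shift by `k` on all of `ℕ`. -/
def shiftN (k : ℕ) : ℕ →. ℕ := fun n => Part.some (n + k)

/-- shift down by 1, defined on positive naturals. -/
def lshift : ℕ →. ℕ := fun n => ⟨0 < n, fun _ => n - 1⟩

/-- identity restricted to positive naturals. -/
def eone : ℕ →. ℕ := fun n => ⟨0 < n, fun _ => n⟩

lemma mem_shiftN {k x y : ℕ} : y ∈ shiftN k x ↔ y = x + k := Part.mem_some_iff

lemma mem_lshift {x y : ℕ} : y ∈ lshift x ↔ 0 < x ∧ x - 1 = y := by
  simp [lshift, Part.mem_eq]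

lemma mem_eone {x y : ℕ} : y ∈ eone x ↔ 0 < x ∧ x = y := by
  simp [eone, Part.mem_eq]

lemma mem_comp_iff {α β γ : Type} {f : β →. γ} {g : α →. β} {a : α} {b : γ} :
    b ∈ f.comp g a ↔ ∃ z ∈ g a, b ∈ f z :=
  Part.mem_bind_iff (g := fun z => f z)

lemma cof_shiftN (k : ℕ) : CofIsoN (shiftN k) := by
  refine ⟨?_, ?_, ?_, ?_⟩
  · have : (PFun.Dom (shiftN k))ᶜ ⊆ (∅ : Set ℕ) := by
      intro x hx; exact hx trivial
    exact Set.Finite.subset (Set.finite_empty) this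
  · have : (PFun.ran (shiftN k))ᶜ ⊆ Set.Iio k := by
      intro y hy
      by_contra h
      simp only [Set.mem_Iio, not_lt] at h
      exact hy ⟨y - k, mem_shiftN.mpr (by omega)⟩
    exact Set.Finite.subset (Set.finite_Iio k) this
  · intro x y x' y' hx hy h
    rw [mem_shiftN] at hx hy; omega
  · intro x y x' y' hx hy
    rw [mem_shiftN] at hx hy
    subst hx; subst hy
    rw [← Int.natCast_natAbs, ← Int.natCast_natAbs]
    omega

lemma cof_lshift : CofIsoN lshift := by
  refine ⟨?_, ?_, ?_, ?_⟩
  · have : (PFun.Dom lshift)ᶜ ⊆ ({0} : Set ℕ) := by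
      intro x hx
      simp only [PFun.Dom, lshift, Set.mem_compl_iff, Set.mem_setOf_eq] at hx
      simpa using by omega
    exact Set.Finite.subset (Set.finite_singleton 0) this
  · have : (PFun.ran lshift)ᶜ ⊆ (∅ : Set ℕ) := by
      intro y hy
      exact hy ⟨y + 1, mem_lshift.mpr (by omega)⟩
    exact Set.Finite.subset (Set.finite_empty) this
  · intro x y x' y' hx hy h
    rw [mem_lshift] at hx hy; omega
  · intro x y x' y' hx hy
    rw [mem_lshift] at hx hy
    obtain ⟨h1, h2⟩ := hx; obtain ⟨h3, h4⟩ := hy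
    subst h2; subst h4
    rw [← Int.natCast_natAbs, ← Int.natCast_natAbs]
    omega

lemma cof_eone : CofIsoN eone := by
  refine ⟨?_, ?_, ?_, ?_⟩
  · have : (PFun.Dom eone)ᶜ ⊆ ({0} : Set ℕ) := by
      intro x hx
      simp only [PFun.Dom, eone, Set.mem_compl_iff, Set.mem_setOf_eq] at hx
      simpa using by omega
    exact Set.Finite.subset (Set.finite_singleton 0) this
  · have : (PFun.ran eone)ᶜ ⊆ ({0} : Set ℕ) := by
      intro y hy
      by_contra h
      simp only [Set.mem_singleton_iff] at h
      exact hy ⟨y, mem_eone.mpr (by omega)⟩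
    exact Set.Finite.subset (Set.finite_singleton 0) this
  · intro x y x' y' hx hy h
    rw [mem_eone] at hx hy; omega
  · intro x y x' y' hx hy
    rw [mem_eone] at hx hy
    obtain ⟨h1, h2⟩ := hx; obtain ⟨h3, h4⟩ := hy
    subst h2; subst h4; rfl

lemma comp_shift (j k : ℕ) : (shiftN k).comp (shiftN j) = shiftN (j + k) := by
  apply PFun.ext; intro a b
  simp only [mem_comp_iff, mem_shiftN]
  constructor
  · rintro ⟨z, rfl, rfl⟩; omega
  · intro h; exact ⟨a + j, by omega, by omega⟩

lemma lshift_shift : lshift.comp (shiftN 1) = shiftN 0 := by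
  apply PFun.ext; intro a b
  simp only [mem_comp_iff, mem_shiftN, mem_lshift]
  constructor
  · rintro ⟨z, rfl, h⟩; omega
  · intro h; exact ⟨a + 1, by omega, by omega, by omega⟩

lemma shift_lshift : (shiftN 1).comp lshift = eone := by
  apply PFun.ext; intro a b
  simp only [mem_comp_iff, mem_shiftN, mem_lshift, mem_eone]
  constructor
  · rintro ⟨z, ⟨h1, h2⟩, rfl⟩; omega
  · rintro ⟨h1, h2⟩; exact ⟨a - 1, ⟨h1, by omega⟩, by omega⟩

lemma eone_shift : eone.comp (shiftN 1) = shiftN 1 := by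
  apply PFun.ext; intro a b
  simp only [mem_comp_iff, mem_shiftN, mem_eone]
  constructor
  · rintro ⟨z, rfl, h1, rfl⟩; rfl
  · intro h; exact ⟨a + 1, by omega, by omega, by omega⟩

lemma eone_eone : eone.comp eone = eone := by
  apply PFun.ext; intro a b
  simp only [mem_comp_iff, mem_eone]
  constructor
  · rintro ⟨z, ⟨h1, rfl⟩, h2, rfl⟩; exact ⟨h1, rfl⟩
  · rintro ⟨h1, rfl⟩; exact ⟨a, ⟨h1, rfl⟩, h1, rfl⟩

/-- Every cofinite partial isometry of ℤ is affine: `x ↦ s x + c` with `s = ±1`. -/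
lemma rigid {f : ℤ →. ℤ} (hf : CofIso f) :
    ∃ s c : ℤ, (s = 1 ∨ s = -1) ∧ ∀ x y, y ∈ f x → y = s * x + c := by
  have hinf : f.Dom.Infinite := by
    have := Set.Finite.infinite_compl hf.1
    rwa [compl_compl] at this
  obtain ⟨a, ha⟩ := hinf.nonempty
  obtain ⟨b, hb⟩ := (hinf.diff (Set.finite_singleton a)).nonempty
  have hba : b ≠ a := by simpa using hb.2
  obtain ⟨fa, hfa⟩ := (PFun.mem_dom _ _).mp ha
  obtain ⟨fb, hfb⟩ := (PFun.mem_dom _ _).mp hb.1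
  have habs := abs_eq_abs.mp (hf.2.2.2 hfb hfa)
  rcases habs with h | h
  · refine ⟨1, fa - a, Or.inl rfl, ?_⟩
    intro x y hxy
    have h1 := abs_eq_abs.mp (hf.2.2.2 hxy hfa)
    have h2 := abs_eq_abs.mp (hf.2.2.2 hxy hfb)
    rcases h1 with h1 | h1 <;> rcases h2 with h2 | h2 <;> omega
  · refine ⟨-1, fa + a, Or.inr rfl, ?_⟩
    intro x y hxy
    have h1 := abs_eq_abs.mp (hf.2.2.2 hxy hfa)
    have h2 := abs_eq_abs.mp (hf.2.2.2 hxy hfb)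
    rcases h1 with h1 | h1 <;> rcases h2 with h2 | h2 <;> omega

/-- A partial identity composes with itself to itself. -/
lemma pid_comp {p : ℤ →. ℤ} (hp : ∀ x y, y ∈ p x → y = x) : p.comp p = p := by
  apply PFun.ext; intro a b
  simp only [mem_comp_iff]
  constructor
  · rintro ⟨z, hz, hb⟩
    have h := hp _ _ hz; subst h; exact hb
  · intro hb
    have h := hp _ _ hb; subst h; exact ⟨b, hb, hb⟩

/-- An idempotent cofinite partial isometry of ℤ is a partial identity. -/
lemma idem_pid {E : ℤ →. ℤ} (hE : CofIso E) (hEE : E.comp E = E) :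
    ∀ x y, y ∈ E x → y = x := by
  obtain ⟨t, c, ht, hf⟩ := rigid hE
  have hinf : E.Dom.Infinite := by
    have := Set.Finite.infinite_compl hE.1
    rwa [compl_compl] at this
  obtain ⟨a, ha⟩ := hinf.nonempty
  obtain ⟨b, hb⟩ := (hinf.diff (Set.finite_singleton a)).nonempty
  have hba : b ≠ a := by simpa using hb.2
  obtain ⟨fa, hfa⟩ := (PFun.mem_dom _ _).mp ha
  obtain ⟨fb, hfb⟩ := (PFun.mem_dom _ _).mp hb.1
  have key : ∀ x y, y ∈ E x → t * x + c = x + t * c + c := by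
    intro x y hxy
    have h1 := hf _ _ hxy
    have hxy2 : y ∈ (E.comp E) x := by rw [hEE]; exact hxy
    rw [mem_comp_iff] at hxy2
    obtain ⟨z, hz, hyz⟩ := hxy2
    have h2 := hf _ _ hz
    have h3 := hf _ _ hyz
    rcases ht with rfl | rfl <;> omega
  have ka := key _ _ hfa
  have kb := key _ _ hfb
  rcases ht with rfl | rfl
  · have hc : c = 0 := by omega
    intro x y hxy
    have := hf _ _ hxy; omega
  · omega

/-- A cofinite subset of ℤ closed under adding `c ≠ 0` is everything. -/
lemma cof_closed {S : Set ℤ} (hfin : Sᶜ.Finite) {c : ℤ} (hc : c ≠ 0)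
    (hstep : ∀ x ∈ S, x + c ∈ S) : ∀ x, x ∈ S := by
  by_contra h
  push_neg at h
  obtain ⟨x, hx⟩ := h
  have hmem : ∀ n : ℕ, x - n * c ∈ Sᶜ := by
    intro n
    induction n with
    | zero => simpa using hx
    | succ n ih =>
      intro hS
      apply ih
      have := hstep _ hS
      have he : x - (↑(n + 1)) * c + c = x - n * c := by push_cast; ring
      rwa [he] at this
  have hinj : Function.Injective (fun n : ℕ => x - n * c) := by
    intro m n h
    simp only at h
    have : (m : ℤ) * c = n * c := by omega
    have := mul_right_cancel₀ hc this
    exact_mod_cast this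
  exact (Set.infinite_of_injective_forall_mem hinj hmem) hfin

end StmtAux
open StmtAux in
/-- There is no injective semigroup (hence no injective monoid) homomorphism from the
monoid IN∞ of all cofinite partial isometries of ℕ into the monoid ID∞ of all cofinite
partial isometries of ℤ (composition of partial maps, first map applied first). -/
theorem stmt_3 :
    ¬ ∃ φ : (ℕ →. ℕ) → (ℤ →. ℤ),
      (∀ f, CofIsoN f → CofIso (φ f)) ∧
      Set.InjOn φ {f | CofIsoN f} ∧
      ∀ f g, CofIsoN f → CofIsoN g → φ (g.comp f) = (φ g).comp (φ f) := by
  rintro ⟨φ, hφ1, hφ2, hφ3⟩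
  have c0 := cof_shiftN 0
  have c1 := cof_shiftN 1
  have c2 := cof_shiftN 2
  have cl := cof_lshift
  have ce := cof_eone
  set u := φ (shiftN 1) with hu_def
  set E := φ (shiftN 0) with hE_def
  set F := φ eone with hF_def
  set v := φ lshift with hv_def
  -- basic relations transported through φ
  have r11 : (shiftN 1).comp (shiftN 1) = shiftN 2 := by
    rw [comp_shift]
  have r22 : (shiftN 2).comp (shiftN 2) = shiftN 4 := by
    rw [comp_shift]
  have hφ2' : ∀ {f g : ℕ →. ℕ}, CofIsoN f → CofIsoN g → φ f = φ g → f = g := by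
    intro f g hf hg h
    exact hφ2 (Set.mem_setOf.mpr hf) (Set.mem_setOf.mpr hg) h
  have hshift_ne : ∀ {j k : ℕ}, j ≠ k → shiftN j ≠ shiftN k := by
    intro j k hjk h
    have := congrFun h 0
    have h2 : (0 + j : ℕ) ∈ shiftN j 0 := mem_shiftN.mpr rfl
    rw [this] at h2
    rw [mem_shiftN] at h2
    omega
  have hEE : E.comp E = E := by
    have h := hφ3 _ _ c0 c0
    rw [comp_shift] at h
    exact h.symm
  have hFF : F.comp F = F := by
    have h := hφ3 _ _ ce ce
    rw [eone_eone] at h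
    exact h.symm
  have hu2 : φ (shiftN 2) = u.comp u := by
    have h := hφ3 _ _ c1 c1
    rwa [r11] at h
  obtain ⟨s, c, hs, hu⟩ := rigid (hφ1 _ c1)
  rcases hs with rfl | rfl
  · -- s = 1
    simp only [one_mul] at hu
    by_cases hc : c = 0
    · -- u is a partial identity, so σ² = σ
      subst hc
      have hpi : ∀ x y, y ∈ u x → y = x := by intro x y h; have := hu _ _ h; omega
      have : φ (shiftN 2) = φ (shiftN 1) := by rw [hu2, pid_comp hpi]
      exact hshift_ne (by omega) (hφ2' c2 c1 this)
    · -- the main case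
      have hEpi := idem_pid (hφ1 _ c0) hEE
      have hFpi := idem_pid (hφ1 _ ce) hFF
      have huE : u.comp E = u := by
        have h := hφ3 _ _ c0 c1
        rw [comp_shift] at h
        exact h.symm
      have hEu : E.comp u = u := by
        have h := hφ3 _ _ c1 c0
        rw [comp_shift] at h
        exact h.symm
      have hFu : F.comp u = u := by
        have h := hφ3 _ _ c1 ce
        rw [eone_shift] at h
        exact h.symm
      have hvu : v.comp u = E := by
        have h := hφ3 _ _ c1 cl
        rw [lshift_shift] at h
        exact h.symm
      have huv : u.comp v = F := by
        have h := hφ3 _ _ cl c1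
        rw [shift_lshift] at h
        exact h.symm
      -- if x is in the domain of E, then u is defined at x and v ∘ u fixes x
      have hDu : ∀ x, x ∈ E x → ∃ y, y ∈ u x ∧ x ∈ v y := by
        intro x hx
        rw [← hvu, mem_comp_iff] at hx
        exact hx
      -- S = fixed set of E is cofinite
      set S : Set ℤ := {x | x ∈ E x} with hS_def
      have hSfin : Sᶜ.Finite := by
        apply Set.Finite.subset (hφ1 _ c0).1
        intro x hx
        intro hdom
        apply hx
        obtain ⟨y, hy⟩ := (PFun.mem_dom _ _).mp hdom
        have := hEpi _ _ hy
        subst this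
        exact hy
      have hSinf : S.Infinite := by
        have := Set.Finite.infinite_compl hSfin
        rwa [compl_compl] at this
      -- v is translation by -c
      have hvf : ∀ x y, y ∈ v x → y = x - c := by
        obtain ⟨t, d, ht, hv⟩ := rigid (hφ1 _ cl)
        obtain ⟨a, ha⟩ := hSinf.nonempty
        obtain ⟨b, hb⟩ := (hSinf.diff (Set.finite_singleton a)).nonempty
        have hba : b ≠ a := by simpa using hb.2
        obtain ⟨ya, hya, hav⟩ := hDu a ha
        obtain ⟨yb, hyb, hbv⟩ := hDu b hb.1
        have h1 : ya = a + c := hu _ _ hya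
        have h2 : yb = b + c := hu _ _ hyb
        have h3 := hv _ _ hav
        have h4 := hv _ _ hbv
        intro x y hxy
        have h5 := hv _ _ hxy
        rcases ht with rfl | rfl <;> omega
      -- S is closed under adding c
      have hstep : ∀ x ∈ S, x + c ∈ S := by
        intro x hx
        obtain ⟨y, hyu, -⟩ := hDu x hx
        have hy : y = x + c := hu _ _ hyu
        have h2 : y ∈ (E.comp u) x := by rw [hEu]; exact hyu
        rw [mem_comp_iff] at h2
        obtain ⟨z, hz, hyz⟩ := h2
        have hz' : z = x + c := hu _ _ hz
        rw [hz', hy] at hyz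
        exact hyz
      have hall : ∀ x, x ∈ E x := cof_closed hSfin hc hstep
      -- hence every x is fixed by F as well
      have hallF : ∀ x, x ∈ F x := by
        intro x
        obtain ⟨y, hyu, -⟩ := hDu (x - c) (hall _)
        have hy : y = x - c + c := hu _ _ hyu
        have h2 : y ∈ (F.comp u) (x - c) := by rw [hFu]; exact hyu
        rw [mem_comp_iff] at h2
        obtain ⟨z, hz, hyz⟩ := h2
        have hy' : y = z := hFpi _ _ hyz
        have hz' : z = x - c + c := hu _ _ hz
        have hzx : z = x := by omega
        rw [hzx] at hyz
        have hyx : y = x := by omega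
        rwa [hyx] at hyz
      -- so E = F, contradicting injectivity
      have hEF : φ (shiftN 0) = φ eone := by
        apply PFun.ext
        intro a b
        constructor
        · intro h
          have hba : b = a := hEpi _ _ h
          rw [hba]
          exact hallF a
        · intro h
          have hba : b = a := hFpi _ _ h
          rw [hba]
          exact hall a
      have := hφ2' c0 ce hEF
      have h0 : (0 + 0 : ℕ) ∈ shiftN 0 0 := mem_shiftN.mpr rfl
      rw [this] at h0
      rw [mem_eone] at h0
      omega
  · -- s = -1 : u ∘ u is a partial identity, so σ⁴ = σ²
    have hpi : ∀ x y, y ∈ (u.comp u) x → y = x := by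
      intro x y h
      rw [mem_comp_iff] at h
      obtain ⟨z, hz, hyz⟩ := h
      have h1 := hu _ _ hz
      have h2 := hu _ _ hyz
      omega
    have h4 : φ (shiftN 4) = φ (shiftN 2) := by
      have h := hφ3 _ _ c2 c2
      rw [r22, hu2] at h
      rw [h, ← hu2, hu2, pid_comp hpi]
    exact hshift_ne (by omega) (hφ2' (cof_shiftN 4) c2 h4)
end

section
/- Let C be a proper cofinite subset of ℤ and let γ: C → C be a bijection that is a partial isometry of ℤ (i.e., |γ(x)−γ(y)| = |x−y| for all x,y ∈ C). Then γ is either the identity map of C or the map x ↦ 2c − x where c = (min(ℤ∖C) + max(ℤ∖C))/2, i.e., γ determines a symmetry of C. -/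
/-- Let C be a proper cofinite subset of ℤ and γ : C → C a bijection of C which is a
partial isometry of ℤ. Then, with m and M the least and greatest elements of ℤ∖C
(so that c = (m+M)/2 is the centre), γ is either the identity map of C or the
symmetry x ↦ 2c − x = m + M − x of C. -/
theorem stmt_8 (C : Set ℤ) (hfin : Cᶜ.Finite) (hproper : C ≠ Set.univ)
    (γ : ℤ → ℤ) (hbij : Set.BijOn γ C C)
    (hiso : ∀ x ∈ C, ∀ y ∈ C, |γ x - γ y| = |x - y|) :
    ∃ m M : ℤ, IsLeast Cᶜ m ∧ IsGreatest Cᶜ M ∧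
      ((∀ x ∈ C, γ x = x) ∨ (∀ x ∈ C, γ x = m + M - x)) := by
  -- Cᶜ is nonempty
  have hne : Cᶜ.Nonempty := by
    rw [Set.nonempty_compl]; exact hproper
  have hfne : hfin.toFinset.Nonempty := by
    rwa [Set.Finite.toFinset_nonempty]
  set m : ℤ := hfin.toFinset.min' hfne with hm
  set M : ℤ := hfin.toFinset.max' hfne with hM
  have hmem : ∀ x : ℤ, x ∈ hfin.toFinset ↔ x ∈ Cᶜ := fun x => hfin.mem_toFinset
  have hleast : IsLeast Cᶜ m := by
    constructor
    · exact (hmem m).1 (hfin.toFinset.min'_mem hfne)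
    · intro x hx
      exact hfin.toFinset.min'_le x ((hmem x).2 hx)
  have hgreat : IsGreatest Cᶜ M := by
    constructor
    · exact (hmem M).1 (hfin.toFinset.max'_mem hfne)
    · intro x hx
      exact hfin.toFinset.le_max' x ((hmem x).2 hx)
  refine ⟨m, M, hleast, hgreat, ?_⟩
  -- C is nonempty (in fact infinite)
  have hCinf : C.Infinite := by
    have := hfin.infinite_compl
    rwa [compl_compl] at this
  obtain ⟨x₀, hx₀⟩ := hCinf.nonempty
  -- each value is one of two forms
  have hform : ∀ x ∈ C, γ x = γ x₀ + (x - x₀) ∨ γ x = γ x₀ - (x - x₀) := by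
    intro x hx
    have h := hiso x hx x₀ hx₀
    rcases abs_eq_abs.1 h with h' | h'
    · left; linarith
    · right; linarith
  by_cases hall : ∀ x ∈ C, γ x = γ x₀ + (x - x₀)
  · -- translation case
    left
    set t : ℤ := γ x₀ - x₀ with ht
    have htr : ∀ x ∈ C, γ x = x + t := by
      intro x hx; have := hall x hx; omega
    -- C + t = C
    have hfw : ∀ x ∈ C, x + t ∈ C := by
      intro x hx
      have := hbij.mapsTo hx
      rwa [htr x hx] at this
    have hbw : ∀ y ∈ C, y - t ∈ C := by
      intro y hy
      obtain ⟨x, hx, hxy⟩ := hbij.surjOn hy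
      rw [htr x hx] at hxy
      have : x = y - t := by omega
      rwa [← this]
    -- complement invariance
    have hcfw : m + t ∈ Cᶜ := by
      intro hmem'
      exact hleast.1 (by simpa using hbw (m + t) hmem')
    have hcbw : m - t ∈ Cᶜ := by
      intro hmem'
      exact hleast.1 (by simpa using hfw (m - t) hmem')
    have h1 := hleast.2 hcfw
    have h2 := hleast.2 hcbw
    have ht0 : t = 0 := by omega
    intro x hx
    rw [htr x hx, ht0]; ring
  · -- reflection case
    right
    push_neg at hall
    obtain ⟨z, hz, hzne⟩ := hall
    have hzform : γ z = γ x₀ - (z - x₀) := by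
      rcases hform z hz with h | h
      · exact absurd h hzne
      · exact h
    have hzx₀ : z ≠ x₀ := by
      intro h; subst h; simp at hzne
    set s : ℤ := γ x₀ + x₀ with hs
    have href : ∀ x ∈ C, γ x = s - x := by
      intro x hx
      rcases hform x hx with h | h
      · -- would give inconsistent signs unless x = x₀
        by_cases hxx : x = x₀
        · subst hxx; omega
        · exfalso
          have hiso' := hiso x hx z hz
          rw [h, hzform] at hiso'
          have h1 : (x - x₀) * (z - x₀) ≠ 0 := by
            apply mul_ne_zero <;> omega
          rcases abs_eq_abs.1 hiso' with h' | h' <;> omega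
      · omega
    -- s - Cᶜ = Cᶜ
    have hfw : ∀ x ∈ C, s - x ∈ C := by
      intro x hx
      have := hbij.mapsTo hx
      rwa [href x hx] at this
    have hcinv : ∀ x ∈ Cᶜ, s - x ∈ Cᶜ := by
      intro x hx hmem'
      apply hx
      have := hfw (s - x) hmem'
      simpa using this
    have h1 : s - m ≤ M := hgreat.2 (hcinv m hleast.1)
    have h2 : m ≤ s - M := hleast.2 (hcinv M hgreat.1)
    have hsmM : s = m + M := by omega
    intro x hx
    rw [href x hx, hsmM]
end

section
/- Every subgroup of the monoid ID∞ of cofinite partial isometries of ℤ whose identity element is not the identity map of ℤ (i.e., every maximal subgroup other than the group of units) is either trivial or isomorphic to ℤ/2ℤ. -/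
/-- Every subgroup of the monoid ID∞ of cofinite partial isometries of ℤ whose identity
element is not the identity map of ℤ is either trivial or isomorphic to ℤ/2ℤ (i.e. it is
a two-element group {e, g} with g² = e). -/
theorem stmt_10 (G : Set (ℤ →. ℤ)) (hG : ∀ g ∈ G, CofIso g)
    (hmul : ∀ g ∈ G, ∀ h ∈ G, h.comp g ∈ G)
    (e : ℤ →. ℤ) (he : e ∈ G)
    (hid : ∀ g ∈ G, e.comp g = g ∧ g.comp e = g)
    (hinv : ∀ g ∈ G, ∃ h ∈ G, h.comp g = e ∧ g.comp h = e)
    (hne : e ≠ PFun.id ℤ) :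
    G = {e} ∨ ∃ g ∈ G, g ≠ e ∧ G = {e, g} ∧ g.comp g = e := by
  classical
  have hcomp : ∀ (f g : ℤ →. ℤ) (x y : ℤ), y ∈ (f.comp g) x ↔ ∃ z ∈ g x, y ∈ f z := by
    intro f g x y
    rw [PFun.comp_apply]; exact Part.mem_bind_iff
  obtain ⟨hDfin, -, heinj, -⟩ := hG e he
  have hee : e.comp e = e := (hid e he).1
  set D := e.Dom with hD
  -- e sends each point of its domain to itself
  have hval : ∀ x y, y ∈ e x → y = x := by
    intro x y hy
    have h1 : y ∈ (e.comp e) x := by rw [hee]; exact hy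
    rw [hcomp] at h1
    obtain ⟨z, hz, hyz⟩ := h1
    have hzy : z = y := Part.mem_unique hz hy
    subst hzy
    exact heinj hyz hy rfl
  have heiff : ∀ x y, y ∈ e x ↔ x ∈ D ∧ y = x := by
    intro x y
    constructor
    · intro h
      exact ⟨(PFun.mem_dom e x).mpr ⟨y, h⟩, hval x y h⟩
    · rintro ⟨hx, h⟩
      subst h
      obtain ⟨z, hz⟩ := (PFun.mem_dom e y).mp hx
      have h2 := hval y z hz
      rwa [h2] at hz
  -- the complement of D is nonempty
  have hDc_ne : (Dᶜ).Nonempty := by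
    rcases Set.eq_empty_or_nonempty Dᶜ with h | h
    · exfalso
      apply hne
      apply PFun.ext
      intro a b
      have ha : a ∈ D := by
        by_contra hc
        exact (Set.eq_empty_iff_forall_notMem.mp h a) hc
      rw [heiff]
      show _ ↔ b ∈ Part.some a
      rw [Part.mem_some_iff]
      tauto
    · exact h
  -- domain and range of every element of G is D
  have hdom : ∀ g ∈ G, g.Dom = D := by
    intro g hg
    apply Set.eq_of_subset_of_subset
    · intro x hx
      obtain ⟨y, hy⟩ := (PFun.mem_dom g x).mp hx
      have h1 : y ∈ (g.comp e) x := (hid g hg).2.symm ▸ hy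
      rw [hcomp] at h1
      obtain ⟨z, hz, -⟩ := h1
      exact (PFun.mem_dom e x).mpr ⟨z, hz⟩
    · intro x hx
      obtain ⟨h, hh, hhe, -⟩ := hinv g hg
      have h1 : x ∈ (h.comp g) x := by rw [hhe]; exact (heiff x x).mpr ⟨hx, rfl⟩
      rw [hcomp] at h1
      obtain ⟨z, hz, -⟩ := h1
      exact (PFun.mem_dom g x).mpr ⟨z, hz⟩
  have hran : ∀ g ∈ G, ∀ y, (∃ x, y ∈ g x) ↔ y ∈ D := by
    intro g hg y
    constructor
    · rintro ⟨x, hx⟩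
      have h1 : y ∈ (e.comp g) x := by rw [(hid g hg).1]; exact hx
      rw [hcomp] at h1
      obtain ⟨z, hz, hyz⟩ := h1
      have hzy : z = y := Part.mem_unique hz hx
      rw [hzy] at hyz
      exact ((heiff y y).mp hyz).1
    · intro hy
      obtain ⟨h, hh, -, hge⟩ := hinv g hg
      have h1 : y ∈ (g.comp h) y := by rw [hge]; exact (heiff y y).mpr ⟨hy, rfl⟩
      rw [hcomp] at h1
      obtain ⟨z, hz, hyz⟩ := h1
      exact ⟨z, hyz⟩
  -- D is infinite; pick two distinct points
  have hDinf : D.Infinite := by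
    have := hDfin.infinite_compl
    rwa [compl_compl] at this
  obtain ⟨a, ha⟩ := hDinf.nonempty
  obtain ⟨b, hb, hba⟩ := (hDinf.diff (Set.finite_singleton a)).nonempty
  have hb' : b ∈ D := hb
  have hab : a ≠ b := fun h => hba h.symm
  -- every g ∈ G is affine on D
  have haff : ∀ g ∈ G, ∃ ε c : ℤ, (ε = 1 ∨ ε = -1) ∧ ∀ x ∈ D, ε * x + c ∈ g x := by
    intro g hg
    obtain ⟨-, -, -, giso⟩ := hG g hg
    have hgd := hdom g hg
    obtain ⟨ya, hya⟩ := (PFun.mem_dom g a).mp (hgd ▸ ha)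
    obtain ⟨yb, hyb⟩ := (PFun.mem_dom g b).mp (hgd ▸ hb')
    have hab' : yb - ya = b - a ∨ yb - ya = -(b - a) := abs_eq_abs.mp (giso hyb hya)
    obtain ⟨ε, hε, hεb⟩ : ∃ ε : ℤ, (ε = 1 ∨ ε = -1) ∧ yb - ya = ε * (b - a) := by
      rcases hab' with h | h
      · exact ⟨1, Or.inl rfl, by linarith⟩
      · exact ⟨-1, Or.inr rfl, by linarith⟩
    refine ⟨ε, ya - ε * a, hε, ?_⟩
    intro x hx
    obtain ⟨yx, hyx⟩ := (PFun.mem_dom g x).mp (hgd ▸ hx)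
    have h1 : yx - ya = x - a ∨ yx - ya = -(x - a) := abs_eq_abs.mp (giso hyx hya)
    have h2 : yx - yb = x - b ∨ yx - yb = -(x - b) := abs_eq_abs.mp (giso hyx hyb)
    have hgoal : yx = ε * x + (ya - ε * a) := by
      rcases hε with rfl | rfl <;> rcases h1 with h1 | h1 <;> rcases h2 with h2 | h2 <;> omega
    exact hgoal ▸ hyx
  -- invariance of the complement under the affine map
  have hkey : ∀ g ∈ G, ∀ ε c : ℤ, (ε = 1 ∨ ε = -1) → (∀ x ∈ D, ε * x + c ∈ g x) →
      (∀ z, z ∉ D → ε * z + c ∉ D) ∧ (∀ z, z ∉ D → ε * (z - c) ∉ D) := by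
    intro g hg ε c hε hv
    have hε2 : ε * ε = 1 := by rcases hε with rfl | rfl <;> ring
    have h1 : ∀ y ∈ D, ε * y + c ∈ D := fun y hy => (hran g hg _).mp ⟨y, hv y hy⟩
    have h2 : ∀ y ∈ D, ε * (y - c) ∈ D := by
      intro y hy
      obtain ⟨x, hx⟩ := (hran g hg y).mpr hy
      have hxD : x ∈ D := hdom g hg ▸ (PFun.mem_dom g x).mpr ⟨y, hx⟩
      have hy' : y = ε * x + c := Part.mem_unique hx (hv x hxD)
      have hx' : ε * (y - c) = x := by linear_combination ε * hy' + x * hε2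
      exact hx' ▸ hxD
    constructor
    · intro z hz hcon
      apply hz
      have h3 := h2 _ hcon
      have hzz : ε * ((ε * z + c) - c) = z := by linear_combination z * hε2
      rwa [hzz] at h3
    · intro z hz hcon
      apply hz
      have h3 := h1 _ hcon
      have hzz : ε * (ε * (z - c)) + c = z := by linear_combination (z - c) * hε2
      rwa [hzz] at h3
  -- extremes of the complement
  set F : Finset ℤ := hDfin.toFinset with hFdef
  have hF : ∀ x, x ∈ F ↔ x ∉ D := by
    intro x
    rw [hFdef, Set.Finite.mem_toFinset]
    rfl
  have hFne : F.Nonempty := by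
    obtain ⟨z, hz⟩ := hDc_ne
    exact ⟨z, (hF z).mpr hz⟩
  set mmax := F.max' hFne with hmax
  set mmin := F.min' hFne with hmin
  set C := mmax + mmin with hC
  have hmaxD : mmax ∉ D := (hF mmax).mp (F.max'_mem hFne)
  have hminD : mmin ∉ D := (hF mmin).mp (F.min'_mem hFne)
  -- dichotomy for elements of G
  have hcases : ∀ g ∈ G, g = e ∨ ∀ x ∈ D, -1 * x + C ∈ g x := by
    intro g hg
    obtain ⟨ε, c, hε, hv⟩ := haff g hg
    obtain ⟨k1, k2⟩ := hkey g hg ε c hε hv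
    rcases hε with rfl | rfl
    · left
      have hc1 : 1 * mmax + c ∈ F := (hF _).mpr (k1 mmax hmaxD)
      have hc2 : 1 * mmin + c ∈ F := (hF _).mpr (k1 mmin hminD)
      have hle1 : 1 * mmax + c ≤ mmax := F.le_max' _ hc1
      have hle2 : mmin ≤ 1 * mmin + c := F.min'_le _ hc2
      have hc0 : c = 0 := by omega
      subst hc0
      apply PFun.ext
      intro x y
      rw [heiff]
      constructor
      · intro hy
        have hxD : x ∈ D := hdom g hg ▸ (PFun.mem_dom g x).mpr ⟨y, hy⟩
        have := Part.mem_unique hy (hv x hxD)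
        exact ⟨hxD, by omega⟩
      · rintro ⟨hxD, h⟩
        rw [h]
        have h3 := hv x hxD
        have hx1 : (1 : ℤ) * x + 0 = x := by ring
        rwa [hx1] at h3
    · right
      have hc1 : -1 * mmax + c ∈ F := (hF _).mpr (k1 mmax hmaxD)
      have hc2 : -1 * mmin + c ∈ F := (hF _).mpr (k1 mmin hminD)
      have hle1 : -1 * mmax + c ≤ mmax := F.le_max' _ hc1
      have hle2 : mmin ≤ -1 * mmax + c := F.min'_le _ hc1
      have hle3 : -1 * mmin + c ≤ mmax := F.le_max' _ hc2
      have hcC : c = C := by rw [hC]; omega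
      exact hcC ▸ hv
  -- uniqueness of the non-identity element
  have huniq : ∀ h ∈ G, (∀ x ∈ D, -1 * x + C ∈ h x) →
      ∀ x y, y ∈ h x ↔ (x ∈ D ∧ y = -1 * x + C) := by
    intro h hh hv x y
    constructor
    · intro hy
      have hxD : x ∈ D := hdom h hh ▸ (PFun.mem_dom h x).mpr ⟨y, hy⟩
      exact ⟨hxD, Part.mem_unique hy (hv x hxD)⟩
    · rintro ⟨hxD, rfl⟩
      exact hv x hxD
  by_cases hall : ∀ g ∈ G, g = e
  · left
    ext g
    simp only [Set.mem_singleton_iff]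
    exact ⟨fun h => hall g h, fun h => h ▸ he⟩
  · right
    push_neg at hall
    obtain ⟨g, hg, hge⟩ := hall
    have hgv : ∀ x ∈ D, -1 * x + C ∈ g x := by
      rcases hcases g hg with heq | hv
      · exact absurd heq hge
      · exact hv
    have hDinv : ∀ y ∈ D, -1 * y + C ∈ D := fun y hy => (hran g hg _).mp ⟨y, hgv y hy⟩
    refine ⟨g, hg, hge, ?_, ?_⟩
    · ext h
      simp only [Set.mem_insert_iff, Set.mem_singleton_iff]
      constructor
      · intro hh
        rcases hcases h hh with heq | hv
        · left; exact heq
        · right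
          apply PFun.ext
          intro x y
          rw [huniq h hh hv, huniq g hg hgv]
      · rintro (rfl | rfl)
        · exact he
        · exact hg
    · apply PFun.ext
      intro x y
      rw [hcomp, heiff]
      constructor
      · rintro ⟨z, hz, hy⟩
        rw [huniq g hg hgv] at hz hy
        obtain ⟨hxD, rfl⟩ := hz
        obtain ⟨-, rfl⟩ := hy
        exact ⟨hxD, by ring⟩
      · rintro ⟨hxD, h⟩
        rw [h]
        refine ⟨-1 * x + C, hgv x hxD, ?_⟩
        rw [huniq g hg hgv]
        exact ⟨hDinv x hxD, by ring⟩
end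

section
/- Let γ be an element of the bicyclic submonoid C_ℕ of IN∞ (i.e., a partial shift with domain of the form [m,∞)∩ℕ) and δ ∈ IN∞. Then n_{γδ}^d − n̲_{γδ}^d ≤ n_δ^d − n̲_δ^d, where for η ∈ IN∞, n̲_η^d = min(dom η) and n_η^d = min{n : [n,∞)∩ℕ ⊆ dom η}. -/
/-- n̲_η^d : the smallest element of the domain of η. -/
noncomputable def lowd (f : ℕ →. ℕ) : ℕ := sInf f.Dom

/-- n_η^d : the smallest n such that every m ≥ n lies in the domain of η. -/
noncomputable def topd (f : ℕ →. ℕ) : ℕ := sInf {n | ∀ m, n ≤ m → m ∈ f.Dom}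

/-- If γ ∈ C_ℕ (an element of IN∞ whose domain is an interval [m,∞)) and δ ∈ IN∞, then
n_{γδ}^d − n̲_{γδ}^d ≤ n_δ^d − n̲_δ^d, where γδ is the composition applying γ first. -/
theorem stmt_13 (γ δ : ℕ →. ℕ) (hγ : CofIsoN γ) (hδ : CofIsoN δ)
    (hC : ∃ m : ℕ, γ.Dom = {n | m ≤ n}) :
    topd (δ.comp γ) - lowd (δ.comp γ) ≤ topd δ - lowd δ := by
  obtain ⟨m, hm⟩ := hC
  have hdom : ∀ x, m ≤ x → (γ x).Dom := by
    intro x hx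
    have : x ∈ γ.Dom := by rw [hm]; exact hx
    exact this
  have hiso := hγ.2.2.2
  set a := (γ m).get (hdom m le_rfl) with ha
  -- γ is a shift on its domain
  have hshift : ∀ x (hx : m ≤ x), ((γ x).get (hdom x hx) : ℤ) = (x : ℤ) + ((a : ℤ) - m) := by
    intro x hx
    set b := (γ x).get (hdom x hx) with hb
    have h1 : |(b : ℤ) - a| = |(x : ℤ) - m| := hiso (Part.get_mem _) (Part.get_mem _)
    have hxm : (m : ℤ) ≤ x := by exact_mod_cast hx
    rw [abs_of_nonneg (by omega : (0:ℤ) ≤ (x:ℤ) - m)] at h1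
    rcases (abs_eq (by omega : (0:ℤ) ≤ (x:ℤ) - m)).mp h1 with h1' | h1'
    · omega
    · -- use a far away point to rule this out (or x = m)
      set z := x + a + 1 with hz
      have hzm : m ≤ z := by omega
      set c := (γ z).get (hdom z hzm) with hc
      have h2 : |(c : ℤ) - a| = |(z : ℤ) - m| := hiso (Part.get_mem _) (Part.get_mem _)
      have h3 : |(c : ℤ) - b| = |(z : ℤ) - x| := hiso (Part.get_mem _) (Part.get_mem _)
      have hzm' : (m : ℤ) ≤ z := by exact_mod_cast hzm
      have hzx : (x : ℤ) ≤ z := by exact_mod_cast Nat.le_add_right x (a+1) |>.trans_eq (by omega)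
      rw [abs_of_nonneg (by omega : (0:ℤ) ≤ (z:ℤ) - m)] at h2
      rw [abs_of_nonneg (by omega : (0:ℤ) ≤ (z:ℤ) - x)] at h3
      rcases (abs_eq (by omega : (0:ℤ) ≤ (z:ℤ) - m)).mp h2 with h2' | h2' <;>
        rcases (abs_eq (by omega : (0:ℤ) ≤ (z:ℤ) - x)).mp h3 with h3' | h3' <;>
        omega
  -- a tail of δ.Dom
  have hSne : ∃ n, ∀ p, n ≤ p → p ∈ δ.Dom := by
    obtain ⟨N, hN⟩ := hδ.1.bddAbove
    refine ⟨N + 1, fun p hp => ?_⟩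
    by_contra hpd
    exact absurd (hN hpd) (by omega)
  have hT : ∀ p, topd δ ≤ p → p ∈ δ.Dom := Nat.sInf_mem hSne
  -- membership in the domain of the composition
  have hmemc : ∀ x (hx : m ≤ x), (γ x).get (hdom x hx) ∈ δ.Dom → x ∈ (δ.comp γ).Dom := by
    intro x hx hgd
    obtain ⟨y, hy⟩ := (PFun.mem_dom δ _).mp hgd
    exact (PFun.mem_dom _ _).mpr ⟨y, by
      rw [PFun.comp_apply]
      exact Part.mem_bind_iff.mpr ⟨_, Part.get_mem _, hy⟩⟩
  have hmemc' : ∀ x, x ∈ (δ.comp γ).Dom → ∃ hx : m ≤ x, (γ x).get (hdom x hx) ∈ δ.Dom := by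
    intro x hxd
    obtain ⟨y, hy⟩ := (PFun.mem_dom _ _).mp hxd
    rw [PFun.comp_apply] at hy
    obtain ⟨w, hw, hyw⟩ := Part.mem_bind_iff.mp hy
    have hx : m ≤ x := by
      have : x ∈ γ.Dom := (PFun.mem_dom γ x).mpr ⟨w, hw⟩
      rwa [hm] at this
    have : w = (γ x).get (hdom x hx) := Part.get_eq_of_mem hw _ |>.symm
    exact ⟨hx, (PFun.mem_dom δ _).mpr ⟨y, this ▸ hyw⟩⟩
  -- the domain of the composition is nonempty
  have hmT : m + topd δ ∈ (δ.comp γ).Dom := by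
    have hx : m ≤ m + topd δ := Nat.le_add_right _ _
    refine hmemc _ hx (hT _ ?_)
    have := hshift (m + topd δ) hx
    omega
  have hLc : lowd (δ.comp γ) ∈ (δ.comp γ).Dom := Nat.sInf_mem ⟨_, hmT⟩
  obtain ⟨hLm, hLd⟩ := hmemc' _ hLc
  have hLle : lowd δ ≤ (γ (lowd (δ.comp γ))).get (hdom _ hLm) := Nat.sInf_le hLd
  -- key bound on topd of the composition
  have hkey : topd (δ.comp γ) ≤ lowd (δ.comp γ) + (topd δ - lowd δ) := by
    apply Nat.sInf_le
    intro p hp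
    have hpm : m ≤ p := le_trans hLm (le_trans (Nat.le_add_right _ _) hp)
    refine hmemc _ hpm (hT _ ?_)
    have h1 := hshift p hpm
    have h2 := hshift _ hLm
    omega
  omega
end

section
/- Let k ≥ 2 be an integer. If γ, δ ∈ IN∞ satisfy n_γ^d − n̲_γ^d ≤ k and n_δ^d − n̲_δ^d ≤ k, then n_{γδ}^d − n̲_{γδ}^d ≤ k. Consequently, for each k ≥ 0, the set IN∞^{g[k]} = {γ ∈ IN∞ : n_γ^d − n̲_γ^d ≤ k} is a subsemigroup of IN∞. -/
/-- IN∞^{g[k]} = {γ ∈ IN∞ : n_γ^d − n̲_γ^d ≤ k}. -/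
def gpart (k : ℕ) : Set (ℕ →. ℕ) := {γ | CofIsoN γ ∧ topd γ - lowd γ ≤ k}

namespace StmtAux

variable {f γ δ : ℕ →. ℕ}

lemma mem_comp {x z : ℕ} : z ∈ (δ.comp γ) x ↔ ∃ y, y ∈ γ x ∧ z ∈ δ y := by
  simp [PFun.comp_apply, Part.mem_bind_iff]
  exact Part.mem_bind_iff

lemma tail_dom (hf : CofIsoN f) : ∃ N : ℕ, ∀ m, N ≤ m → m ∈ f.Dom := by
  obtain ⟨B, hB⟩ := hf.1.bddAbove
  refine ⟨B + 1, fun m hm => ?_⟩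
  by_contra h
  exact absurd (hB h) (by omega)

lemma topd_spec (hf : CofIsoN f) : ∀ m, topd f ≤ m → m ∈ f.Dom := by
  obtain ⟨N, hN⟩ := tail_dom hf
  exact Nat.sInf_mem (⟨N, hN⟩ : {n | ∀ m, n ≤ m → m ∈ f.Dom}.Nonempty)

lemma topd_le {n : ℕ} (h : ∀ m, n ≤ m → m ∈ f.Dom) : topd f ≤ n := Nat.sInf_le h

lemma lowd_le {x : ℕ} (h : x ∈ f.Dom) : lowd f ≤ x := Nat.sInf_le h

lemma lowd_mem (hf : CofIsoN f) : lowd f ∈ f.Dom :=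
  Nat.sInf_mem ⟨topd f, topd_spec hf _ le_rfl⟩

lemma exists_ge_dom (hf : CofIsoN f) (N : ℕ) : ∃ x, N ≤ x ∧ x ∈ f.Dom := by
  obtain ⟨M, hM⟩ := tail_dom hf
  exact ⟨max N M, le_max_left _ _, hM _ (le_max_right _ _)⟩

/-- Every cofinite partial isometry is a shift. -/
lemma exists_shift (hf : CofIsoN f) : ∃ c : ℤ, ∀ x y : ℕ, y ∈ f x → (y : ℤ) = x + c := by
  have hiso := hf.2.2.2
  obtain ⟨a, -, ha⟩ := exists_ge_dom hf 0
  obtain ⟨fa, hfa⟩ := (PFun.mem_dom f a).1 ha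
  obtain ⟨b, hbge, hb⟩ := exists_ge_dom hf (fa + a + 1)
  obtain ⟨fb, hfb⟩ := (PFun.mem_dom f b).1 hb
  refine ⟨(fa : ℤ) - a, ?_⟩
  have h1 : |(fb : ℤ) - fa| = |(b : ℤ) - a| := hiso hfb hfa
  have hfb' : (fb : ℤ) = b + ((fa : ℤ) - a) := by
    rcases abs_eq_abs.1 h1 with h | h
    · omega
    · omega
  intro x y hy
  have h2 : |(y : ℤ) - fb| = |(x : ℤ) - b| := hiso hy hfb
  have h3 : |(y : ℤ) - fa| = |(x : ℤ) - a| := hiso hy hfa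
  rcases abs_eq_abs.1 h2 with h | h
  · omega
  · rcases abs_eq_abs.1 h3 with h' | h'
    · omega
    · omega

lemma gap_comp (hγ : CofIsoN γ) (hδ : CofIsoN δ) (k : ℕ)
    (h1 : topd γ - lowd γ ≤ k) (h2 : topd δ - lowd δ ≤ k) :
    topd (δ.comp γ) - lowd (δ.comp γ) ≤ k := by
  obtain ⟨cg, hcg⟩ := exists_shift hγ
  set M : ℕ := ((topd δ : ℤ) - cg).toNat with hM
  -- tail of comp domain
  have htail : ∀ m, max (topd γ) M ≤ m → m ∈ (δ.comp γ).Dom := by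
    intro m hm
    obtain ⟨y, hy⟩ := (PFun.mem_dom γ m).1 (topd_spec hγ m (le_trans (le_max_left _ _) hm))
    have hyv : (y : ℤ) = m + cg := hcg _ _ hy
    have hyd : topd δ ≤ y := by
      have hMm : M ≤ m := le_trans (le_max_right _ _) hm
      have := Int.toNat_le.mp hMm
      omega
    obtain ⟨z, hz⟩ := (PFun.mem_dom δ y).1 (topd_spec hδ y hyd)
    exact (PFun.mem_dom _ m).2 ⟨z, mem_comp.2 ⟨y, hy, hz⟩⟩
  have hT : topd (δ.comp γ) ≤ max (topd γ) M := topd_le htail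
  -- lowest element of comp domain
  have hLmem : lowd (δ.comp γ) ∈ (δ.comp γ).Dom :=
    Nat.sInf_mem ⟨max (topd γ) M, htail _ le_rfl⟩
  obtain ⟨z, hz⟩ := (PFun.mem_dom _ _).1 hLmem
  obtain ⟨y, hy, hzy⟩ := mem_comp.1 hz
  have hL1 : lowd γ ≤ lowd (δ.comp γ) := lowd_le ((PFun.mem_dom γ _).2 ⟨y, hy⟩)
  have hL2 : lowd δ ≤ y := lowd_le ((PFun.mem_dom δ _).2 ⟨z, hzy⟩)
  have hyv : (y : ℤ) = (lowd (δ.comp γ) : ℤ) + cg := hcg _ _ hy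
  have hMv : (M : ℤ) = (topd δ : ℤ) - cg ∨ (M = 0 ∧ (topd δ : ℤ) - cg ≤ 0) := by
    rcases le_or_gt ((topd δ : ℤ) - cg) 0 with h | h
    · right; exact ⟨by simpa [hM] using Int.toNat_of_nonpos h, h⟩
    · left; rw [hM, Int.toNat_of_nonneg (by omega)]
  rcases max_cases (topd γ) M with ⟨he, hle⟩ | ⟨he, hle⟩ <;> rw [he] at hT <;> omega

lemma cofIso_comp (hγ : CofIsoN γ) (hδ : CofIsoN δ) : CofIsoN (δ.comp γ) := by
  obtain ⟨cg, hcg⟩ := exists_shift hγ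
  obtain ⟨cd, hcd⟩ := exists_shift hδ
  obtain ⟨B, hB⟩ := hδ.1.bddAbove
  obtain ⟨B', hB'⟩ := hγ.2.1.bddAbove
  refine ⟨?_, ?_, ?_, ?_⟩
  · -- domain cofinite
    refine Set.Finite.subset ((hγ.1.union (Set.finite_Iic (B + cg.natAbs)))) ?_
    intro x hx
    by_cases hxd : x ∈ γ.Dom
    · obtain ⟨y, hy⟩ := (PFun.mem_dom γ x).1 hxd
      have hynd : y ∉ δ.Dom := by
        intro hyd
        obtain ⟨z, hz⟩ := (PFun.mem_dom δ y).1 hyd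
        exact hx ((PFun.mem_dom _ x).2 ⟨z, mem_comp.2 ⟨y, hy, hz⟩⟩)
      have hyB : y ≤ B := hB hynd
      have := hcg _ _ hy
      have : x ≤ B + cg.natAbs := by omega
      exact Or.inr this
    · exact Or.inl hxd
  · -- range cofinite
    refine Set.Finite.subset ((hδ.2.1.union (Set.finite_Iic (B' + cd.natAbs)))) ?_
    intro z hz
    by_cases hzr : z ∈ δ.ran
    · obtain ⟨y, hy⟩ := hzr
      have hynr : y ∉ γ.ran := by
        intro hyr
        obtain ⟨x, hx⟩ := hyr
        exact hz ⟨x, mem_comp.2 ⟨y, hx, hy⟩⟩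
      have hyB : y ≤ B' := hB' hynr
      have := hcd _ _ hy
      have : z ≤ B' + cd.natAbs := by omega
      exact Or.inr this
    · exact Or.inl hzr
  · -- injective
    intro x y x' y' hx' hy' hxy
    obtain ⟨u, hu, hux⟩ := mem_comp.1 hx'
    obtain ⟨v, hv, hvy⟩ := mem_comp.1 hy'
    exact hγ.2.2.1 hu hv (hδ.2.2.1 hux hvy hxy)
  · -- isometry
    intro x y x' y' hx' hy'
    obtain ⟨u, hu, hux⟩ := mem_comp.1 hx'
    obtain ⟨v, hv, hvy⟩ := mem_comp.1 hy'
    rw [hδ.2.2.2 hux hvy, hγ.2.2.2 hu hv]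

end StmtAux

/-- If k ≥ 2 and γ, δ ∈ IN∞ satisfy n_γ^d − n̲_γ^d ≤ k and n_δ^d − n̲_δ^d ≤ k, then
n_{γδ}^d − n̲_{γδ}^d ≤ k (γδ applies γ first); consequently, for every k ≥ 0 the set
IN∞^{g[k]} is a subsemigroup of IN∞. -/
theorem stmt_14 :
    (∀ k : ℕ, 2 ≤ k → ∀ γ δ : ℕ →. ℕ, CofIsoN γ → CofIsoN δ →
      topd γ - lowd γ ≤ k → topd δ - lowd δ ≤ k →
      topd (δ.comp γ) - lowd (δ.comp γ) ≤ k) ∧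
    (∀ k : ℕ, ∀ γ ∈ gpart k, ∀ δ ∈ gpart k, δ.comp γ ∈ gpart k) := by
  constructor
  · intro k _ γ δ hγ hδ h1 h2
    exact StmtAux.gap_comp hγ hδ k h1 h2
  · intro k γ hγ δ hδ
    exact ⟨StmtAux.cofIso_comp hγ.1 hδ.1, StmtAux.gap_comp hγ.1 hδ.1 k hγ.2 hδ.2⟩
end

section
/- The monoid IN∞ of all cofinite partial isometries of ℕ is not finitely generated: no finite subset A ⊆ IN∞ satisfies ⟨A⟩ = IN∞. -/
/-- Membership in the submonoid generated by a set A of partial maps of ℕ: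
finite products of elements of A (together with the identity). -/
inductive Gen (A : Set (ℕ →. ℕ)) : (ℕ →. ℕ) → Prop
  | one : Gen A (PFun.id ℕ)
  | mem {f} : f ∈ A → Gen A f
  | mul {f g} : Gen A f → Gen A g → Gen A (g.comp f)

/-- `f` acts like a translation: differences are preserved with sign. -/
def AffLike (f : ℕ →. ℕ) : Prop :=
  ∀ ⦃x y x' y'⦄, y ∈ f x → y' ∈ f x' → (y : ℤ) - x = (y' : ℤ) - x'

lemma cofIsoN_affLike {f : ℕ →. ℕ} (hf : CofIsoN f) : AffLike f := by
  obtain ⟨hdom, -, -, hiso⟩ := hf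
  intro x y x' y' hxy hxy'
  -- pick a large point of the domain
  have hfin : (f.Domᶜ ∪ Set.Iic (x + y + x' + y')).Finite :=
    hdom.union (Set.finite_Iic _)
  obtain ⟨z, hz⟩ := hfin.infinite_compl.nonempty
  simp only [Set.mem_compl_iff, Set.mem_union, not_or, Set.mem_Iic, not_le,
    Set.not_notMem] at hz
  obtain ⟨hzdom, hzbig⟩ := hz
  rw [PFun.mem_dom] at hzdom
  obtain ⟨w, hw⟩ := hzdom
  have h1 : |(y : ℤ) - w| = |(x : ℤ) - z| := hiso hxy hw
  have h2 : |(y' : ℤ) - w| = |(x' : ℤ) - z| := hiso hxy' hw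
  rw [abs_eq_abs] at h1 h2
  have hb : (x : ℤ) + y + x' + y' < z := by exact_mod_cast hzbig
  have hw0 : (0 : ℤ) ≤ w := Int.ofNat_nonneg w
  omega

lemma gen_affLike {A : Set (ℕ →. ℕ)} (hA : ∀ a ∈ A, AffLike a)
    {f : ℕ →. ℕ} (hf : Gen A f) : AffLike f := by
  induction hf with
  | one =>
      intro x y x' y' hxy hxy'
      simp only [PFun.id, Part.mem_some_iff] at hxy hxy'
      subst hxy; subst hxy'; ring
  | mem h => exact hA _ h
  | @mul f g hf hg ihf ihg =>
      intro x y x' y' hxy hxy'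
      simp only [PFun.comp_apply, Part.mem_bind_iff (g := g)] at hxy hxy'
      obtain ⟨u, hu, hyu⟩ := hxy
      obtain ⟨u', hu', hyu'⟩ := hxy'
      have h1 := ihf hu hu'
      have h2 := ihg hyu hyu'
      omega

/-- Above any point of the domain, everything past the common bound `N`
is in the domain of a generated map. -/
lemma gen_upward {A : Set (ℕ →. ℕ)} (hA : ∀ a ∈ A, AffLike a) {N : ℕ}
    (hN : ∀ a ∈ A, ∀ z : ℕ, N < z → z ∈ a.Dom)
    {f : ℕ →. ℕ} (hf : Gen A f) :
    ∀ x y : ℕ, y ∈ f x → ∀ z : ℕ, x + N < z → z ∈ f.Dom := by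
  induction hf with
  | one =>
      intro x y _ z _
      simp [PFun.id, PFun.mem_dom]
      exact trivial
  | mem h => exact fun x y _ z hz => hN _ h z (by omega)
  | @mul f g hf hg ihf ihg =>
      intro x y hxy z hz
      simp only [PFun.comp_apply, Part.mem_bind_iff (g := g)] at hxy
      obtain ⟨u, hu, hyu⟩ := hxy
      have hzf : z ∈ f.Dom := ihf x u hu z hz
      rw [PFun.mem_dom] at hzf
      obtain ⟨w, hw⟩ := hzf
      have haff := gen_affLike hA hf hw hu
      have hwbig : u + N < w := by omega
      have hwg : w ∈ g.Dom := ihg u y hyu w hwbig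
      rw [PFun.mem_dom] at hwg ⊢
      obtain ⟨v, hv⟩ := hwg
      exact ⟨v, by simp only [PFun.comp_apply, Part.mem_bind_iff (g := g)]; exact ⟨w, hw, hv⟩⟩

/-- The monoid IN∞ of all cofinite partial isometries of ℕ is not finitely generated:
no finite subset A of IN∞ generates IN∞. -/
theorem stmt_15 :
    ¬ ∃ A : Set (ℕ →. ℕ), A.Finite ∧ A ⊆ {f | CofIsoN f} ∧
      ∀ f, CofIsoN f → Gen A f := by
  rintro ⟨A, hfin, hsub, hgen⟩
  have haff : ∀ a ∈ A, AffLike a := fun a ha => cofIsoN_affLike (hsub ha)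
  -- a common bound for the domain complements
  have hSfin : (⋃ a ∈ A, a.Domᶜ).Finite :=
    Set.Finite.biUnion hfin (fun a ha => (hsub ha).1)
  obtain ⟨N, hNb⟩ := hSfin.bddAbove
  have hNdom : ∀ a ∈ A, ∀ z : ℕ, N < z → z ∈ a.Dom := by
    intro a ha z hz
    by_contra h
    exact absurd (hNb (Set.mem_biUnion ha h)) (by omega)
  -- the partial identity with a single hole at N+1
  set f : ℕ →. ℕ := fun n => if n = N + 1 then Part.none else Part.some n with hfdef
  have hmem : ∀ x y : ℕ, y ∈ f x ↔ x ≠ N + 1 ∧ y = x := by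
    intro x y
    by_cases h : x = N + 1 <;> simp [hfdef, h, eq_comm]
  have hCof : CofIsoN f := by
    refine ⟨?_, ?_, ?_, ?_⟩
    · apply Set.Finite.subset (Set.finite_singleton (N + 1))
      intro x hx
      simp only [Set.mem_compl_iff, PFun.mem_dom, not_exists] at hx
      by_contra h
      exact hx x ((hmem x x).mpr ⟨h, rfl⟩)
    · apply Set.Finite.subset (Set.finite_singleton (N + 1))
      intro y hy
      simp only [Set.mem_compl_iff, PFun.ran, Set.mem_setOf_eq, not_exists] at hy
      by_contra h
      exact hy y ((hmem y y).mpr ⟨h, rfl⟩)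
    · intro x y x' y' hx hy hxy
      rw [hmem] at hx hy
      omega
    · intro x y x' y' hx hy
      rw [hmem] at hx hy
      rw [hx.2, hy.2]
  have hgenf := hgen f hCof
  have h0 : (0 : ℕ) ∈ f 0 := (hmem 0 0).mpr ⟨by omega, rfl⟩
  have := gen_upward haff hNdom hgenf 0 0 h0 (N + 1) (by omega)
  rw [PFun.mem_dom] at this
  obtain ⟨y, hy⟩ := this
  exact ((hmem (N + 1) y).mp hy).1 rfl
end

section
/- The set A = {α, β} ∪ {ε^{[k]} : k ≥ 2}, where α(n) = n+1 (total), β(n) = n−1 with dom β = ℕ∖{1}, and ε^{[k]} is the identity map of ℕ∖{k}, generates the monoid IN∞ of cofinite partial isometries of ℕ: every γ ∈ IN∞ is a finite product of elements of A. -/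
/-- The total shift α(n) = n+1. -/
def amap : ℕ →. ℕ := fun n => Part.some (n + 1)

/-- The partial shift β(n) = n−1 with domain ℕ minus its least element. -/
def bmap : ℕ →. ℕ := PFun.res (fun n => n - 1) {n | n ≠ 0}

/-- ε^{[k]} : the identity map of ℕ∖{k}. -/
def eps (k : ℕ) : ℕ →. ℕ := PFun.res id {n | n ≠ k}

abbrev Aset : Set (ℕ →. ℕ) := {amap, bmap} ∪ {g | ∃ k : ℕ, 2 ≤ k ∧ g = eps k}

lemma gen_congr {f g : ℕ →. ℕ} (h : Gen Aset f) (e : f = g) : Gen Aset g := e ▸ h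

lemma mem_bind_pfun {o : Part ℕ} {g : ℕ →. ℕ} {b : ℕ} : b ∈ o.bind g ↔ ∃ y ∈ o, b ∈ g y :=
  Part.mem_bind_iff

lemma comp_apply_fp (f : ℕ → Part ℕ) (g : ℕ →. ℕ) (a : ℕ) : PFun.comp g f a = (f a).bind g := rfl

lemma comp_apply_pf (f : ℕ →. ℕ) (g : ℕ → Part ℕ) (a : ℕ) : PFun.comp g f a = (f a).bind g := rfl

lemma mem_amap (a b : ℕ) : b ∈ amap a ↔ b = a + 1 := by
  simp [amap, eq_comm]

lemma mem_bmap (a b : ℕ) : b ∈ bmap a ↔ a ≠ 0 ∧ a - 1 = b := by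
  simp [bmap, PFun.mem_res]

lemma mem_eps (k a b : ℕ) : b ∈ eps k a ↔ a ≠ k ∧ a = b := by
  simp [eps, PFun.mem_res]

lemma gen_eps (k : ℕ) : Gen Aset (eps k) := by
  rcases Nat.lt_or_ge k 2 with hk | hk
  · interval_cases k
    · refine gen_congr (Gen.mul (Gen.mem (Or.inl (Or.inr rfl)))
        (Gen.mem (Or.inl (Or.inl rfl)))) ?_
      apply PFun.ext; intro a b
      simp only [comp_apply_fp, comp_apply_pf, mem_bind_pfun, PFun.comp_apply, Part.mem_bind_iff, mem_bmap, mem_amap, mem_eps]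
      constructor
      · rintro ⟨y, ⟨ha, rfl⟩, rfl⟩; omega
      · rintro ⟨ha, rfl⟩; exact ⟨a - 1, ⟨ha, rfl⟩, by omega⟩
    · have h2 : Gen Aset (eps 2) := Gen.mem (Or.inr ⟨2, le_refl 2, rfl⟩)
      refine gen_congr (Gen.mul (Gen.mul (Gen.mem (Or.inl (Or.inl rfl))) h2)
        (Gen.mem (Or.inl (Or.inr rfl)))) ?_
      apply PFun.ext; intro a b
      simp only [comp_apply_fp, comp_apply_pf, mem_bind_pfun, PFun.comp_apply, Part.mem_bind_iff, mem_bmap, mem_amap, mem_eps]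
      constructor
      · rintro ⟨y, ⟨z, rfl, hz, rfl⟩, hy⟩; omega
      · rintro ⟨ha, rfl⟩; exact ⟨a + 1, ⟨a + 1, rfl, by omega, rfl⟩, by omega⟩
  · exact Gen.mem (Or.inr ⟨k, hk, rfl⟩)

lemma gen_resF (F : Finset ℕ) : Gen Aset (PFun.res id {n | n ∉ F}) := by
  induction F using Finset.induction_on with
  | empty =>
    refine gen_congr Gen.one ?_
    apply PFun.ext; intro a b
    simp [PFun.mem_res, PFun.id, eq_comm]
  | @insert k F hk ih =>
    refine gen_congr (Gen.mul ih (gen_eps k)) ?_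
    apply PFun.ext; intro a b
    simp only [comp_apply_fp, comp_apply_pf, mem_bind_pfun, PFun.comp_apply, Part.mem_bind_iff, PFun.mem_res, mem_eps, Set.mem_setOf_eq,
      Finset.mem_insert, id_eq]
    constructor
    · rintro ⟨y, ⟨ha, rfl⟩, hne, rfl⟩; exact ⟨by tauto, rfl⟩
    · rintro ⟨ha, rfl⟩; exact ⟨a, ⟨fun h => ha (Or.inr h), rfl⟩, fun h => ha (Or.inl h), rfl⟩

lemma gen_res {S : Set ℕ} (hS : Sᶜ.Finite) : Gen Aset (PFun.res id S) := by
  have : S = {n | n ∉ hS.toFinset} := by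
    ext n; simp [Set.Finite.mem_toFinset]
  rw [this]
  exact gen_resF hS.toFinset

lemma gen_shiftpos (c : ℕ) : Gen Aset (fun n => Part.some (n + c)) := by
  induction c with
  | zero => exact gen_congr Gen.one (by funext n; simp [PFun.id])
  | succ c ih =>
    refine gen_congr (Gen.mul ih (Gen.mem (Or.inl (Or.inl rfl)))) ?_
    apply PFun.ext; intro a b
    simp only [comp_apply_fp, comp_apply_pf, mem_bind_pfun, PFun.comp_apply, Part.mem_bind_iff, Part.mem_some_iff, mem_amap]
    constructor
    · rintro ⟨y, rfl, rfl⟩; rfl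
    · rintro rfl; exact ⟨a + c, rfl, rfl⟩

lemma gen_shiftneg (m : ℕ) : Gen Aset (PFun.res (fun n => n - m) {n | m ≤ n}) := by
  induction m with
  | zero =>
    refine gen_congr Gen.one ?_
    apply PFun.ext; intro a b
    simp [PFun.mem_res, PFun.id, eq_comm]
  | succ m ih =>
    refine gen_congr (Gen.mul ih (Gen.mem (Or.inl (Or.inr rfl)))) ?_
    apply PFun.ext; intro a b
    simp only [comp_apply_fp, comp_apply_pf, mem_bind_pfun, PFun.comp_apply, Part.mem_bind_iff, PFun.mem_res, mem_bmap, Set.mem_setOf_eq]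
    constructor
    · rintro ⟨y, ⟨ha, rfl⟩, hy, rfl⟩; omega
    · rintro ⟨ha, rfl⟩; exact ⟨a - m, ⟨by omega, rfl⟩, by omega, by omega⟩

/-- The set A = {α, β} ∪ {ε^{[k]} : k ≥ 2} generates the monoid IN∞ of cofinite partial
isometries of ℕ: every γ ∈ IN∞ is a finite product of elements of A. -/
theorem stmt_16 :
    ∀ f, CofIsoN f → Gen ({amap, bmap} ∪ {g | ∃ k : ℕ, 2 ≤ k ∧ g = eps k}) f := by
  intro f hf
  obtain ⟨hdom, _, _, hiso⟩ := hf
  have hinf : f.Dom.Infinite := by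
    have := hdom.infinite_compl
    rwa [compl_compl] at this
  -- the shift constant is the same for all points
  have key : ∀ ⦃x x' y y' : ℕ⦄, x' ∈ f x → y' ∈ f y → (x' : ℤ) - x = (y' : ℤ) - y := by
    intro x x' y y' hx hy
    obtain ⟨z, hzdom, hz⟩ := hinf.exists_gt (x + x' + y + y')
    obtain ⟨z', hz'⟩ := (PFun.mem_dom f z).mp hzdom
    have h1 := abs_eq_abs.mp (hiso hz' hx)
    have h2 := abs_eq_abs.mp (hiso hz' hy)
    have hz0 : (0 : ℤ) ≤ (z' : ℤ) := Int.ofNat_nonneg z'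
    have hzc : (x : ℤ) + x' + y + y' < z := by exact_mod_cast hz
    omega
  have hne : f.Dom.Nonempty := hinf.nonempty
  obtain ⟨x0, hx0⟩ := hne
  obtain ⟨y0, hy0⟩ := (PFun.mem_dom f x0).mp hx0
  set c : ℤ := (y0 : ℤ) - x0 with hc
  have char : ∀ x y : ℕ, y ∈ f x ↔ x ∈ f.Dom ∧ (y : ℤ) = x + c := by
    intro x y
    constructor
    · intro h
      refine ⟨(PFun.mem_dom f x).mpr ⟨y, h⟩, ?_⟩
      have := key h hy0
      omega
    · rintro ⟨hx, hxy⟩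
      obtain ⟨y', hy'⟩ := (PFun.mem_dom f x).mp hx
      have h1 := key hy' hy0
      have : y = y' := by omega
      rwa [this]
  have genA : Gen Aset (PFun.res id f.Dom) := gen_res hdom
  rcases le_or_gt 0 c with hc0 | hc0
  · refine gen_congr (Gen.mul genA (gen_shiftpos c.toNat)) ?_
    apply PFun.ext; intro a b
    simp only [comp_apply_fp, comp_apply_pf, mem_bind_pfun, PFun.comp_apply, Part.mem_bind_iff, PFun.mem_res, Part.mem_some_iff, id_eq,
      char]
    constructor
    · rintro ⟨y, ⟨ha, rfl⟩, rfl⟩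
      exact ⟨ha, by push_cast; omega⟩
    · rintro ⟨ha, hb⟩
      exact ⟨a, ⟨ha, rfl⟩, by omega⟩
  · refine gen_congr (Gen.mul genA (gen_shiftneg (-c).toNat)) ?_
    apply PFun.ext; intro a b
    simp only [comp_apply_fp, comp_apply_pf, mem_bind_pfun, PFun.comp_apply, Part.mem_bind_iff, PFun.mem_res, Set.mem_setOf_eq, id_eq,
      char]
    constructor
    · rintro ⟨y, ⟨ha, rfl⟩, hm, rfl⟩
      exact ⟨ha, by omega⟩
    · rintro ⟨ha, hb⟩
      have hb0 : (0 : ℤ) ≤ (b : ℤ) := Int.ofNat_nonneg b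
      exact ⟨a, ⟨ha, rfl⟩, by omega, by omega⟩
end

section
/- If A is any generating set of the monoid IN∞ of cofinite partial isometries of ℕ, then A contains at least two distinct elements of the bicyclic submonoid C_ℕ, namely an element with domain all of ℕ and an element with range all of ℕ (other than the identity). -/
/-- Every cofinite partial isometry of ℕ is a partial shift. -/
lemma shift_of {f : ℕ →. ℕ} (h : CofIsoN f) :
    ∃ c : ℤ, ∀ ⦃x y⦄, y ∈ f x → (y : ℤ) = x + c := by
  obtain ⟨hd, -, -, hiso⟩ := h
  have hinf : f.Dom.Infinite := by
    have := hd.infinite_compl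
    rwa [compl_compl] at this
  obtain ⟨x0, hx0⟩ := hinf.nonempty
  have hmem0 : (f x0).get hx0 ∈ f x0 := Part.get_mem hx0
  set y0 := (f x0).get hx0
  refine ⟨(y0 : ℤ) - x0, ?_⟩
  intro x y hxy
  obtain ⟨x3, hx3mem, hx3⟩ := hinf.exists_gt (y0 + x0 + y + x)
  have hmem3 : (f x3).get hx3mem ∈ f x3 := Part.get_mem hx3mem
  set y3 := (f x3).get hx3mem
  have h1 := hiso hmem3 hmem0
  have h2 := hiso hmem3 hxy
  rcases abs_eq_abs.mp h1 with h1 | h1 <;> rcases abs_eq_abs.mp h2 with h2 | h2 <;> omega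

lemma id_of {f : ℕ →. ℕ} (h : CofIsoN f) (hd : f.Dom = Set.univ)
    (hr : f.ran = Set.univ) : f = PFun.id ℕ := by
  obtain ⟨c, hc⟩ := shift_of h
  have h0d : (0 : ℕ) ∈ f.Dom := hd ▸ Set.mem_univ 0
  obtain ⟨y, hy⟩ := (f.mem_dom 0).mp h0d
  have hcnn : 0 ≤ c := by have := hc hy; omega
  have h0r : (0 : ℕ) ∈ f.ran := hr ▸ Set.mem_univ 0
  obtain ⟨x, hx⟩ := h0r
  have hcnp : c ≤ 0 := by have := hc hx; omega
  have hc0 : c = 0 := le_antisymm hcnp hcnn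
  funext a
  have had : (a : ℕ) ∈ f.Dom := hd ▸ Set.mem_univ a
  obtain ⟨b, hb⟩ := (f.mem_dom a).mp had
  have : b = a := by have := hc hb; omega
  rw [this] at hb
  show f a = Part.some a
  exact Part.eq_some_iff.mpr hb

lemma ran_univ_dom {f : ℕ →. ℕ} (h : CofIsoN f) (hr : f.ran = Set.univ) :
    ∃ m : ℕ, f.Dom = {n | m ≤ n} := by
  obtain ⟨c, hc⟩ := shift_of h
  have h0r : (0 : ℕ) ∈ f.ran := hr ▸ Set.mem_univ 0
  obtain ⟨m, hm⟩ := h0r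
  have hcm : c = -(m : ℤ) := by have := hc hm; omega
  refine ⟨m, Set.ext fun x => ?_⟩
  constructor
  · intro hx
    obtain ⟨y, hy⟩ := (f.mem_dom x).mp hx
    have := hc hy
    simp only [Set.mem_setOf_eq]
    omega
  · intro hx
    simp only [Set.mem_setOf_eq] at hx
    have : (x - m : ℕ) ∈ f.ran := hr ▸ Set.mem_univ _
    obtain ⟨z, hz⟩ := this
    have := hc hz
    have hzx : z = x := by omega
    exact (f.mem_dom x).mpr ⟨_, hzx ▸ hz⟩

lemma gen_dom {A : Set (ℕ →. ℕ)} {f : ℕ →. ℕ} (hf : Gen A f)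
    (hd : f.Dom = Set.univ) (hne : f ≠ PFun.id ℕ) :
    ∃ a ∈ A, a.Dom = Set.univ ∧ a ≠ PFun.id ℕ := by
  induction hf with
  | one => exact absurd rfl hne
  | mem h => exact ⟨_, h, hd, hne⟩
  | @mul p q hp hq ihp ihq =>
    have hdp : p.Dom = Set.univ := by
      apply Set.eq_univ_of_forall
      intro x
      have hx : x ∈ (q.comp p).Dom := hd ▸ Set.mem_univ x
      obtain ⟨y, hy⟩ := ((q.comp p).mem_dom x).mp hx
      rw [PFun.comp_apply] at hy
      replace hy := (Part.mem_bind_iff (f := p x) (g := q)).mp hy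
      obtain ⟨z, hz, -⟩ := hy
      exact (p.mem_dom x).mpr ⟨z, hz⟩
    by_cases hpi : p = PFun.id ℕ
    · subst hpi
      rw [PFun.comp_id] at hd hne
      exact ihq hd hne
    · exact ihp hdp hpi

lemma gen_ran {A : Set (ℕ →. ℕ)} {f : ℕ →. ℕ} (hf : Gen A f)
    (hr : f.ran = Set.univ) (hne : f ≠ PFun.id ℕ) :
    ∃ b ∈ A, b.ran = Set.univ ∧ b ≠ PFun.id ℕ := by
  induction hf with
  | one => exact absurd rfl hne
  | mem h => exact ⟨_, h, hr, hne⟩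
  | @mul p q hp hq ihp ihq =>
    have hrq : q.ran = Set.univ := by
      apply Set.eq_univ_of_forall
      intro y
      have hy : y ∈ (q.comp p).ran := hr ▸ Set.mem_univ y
      obtain ⟨x, hx⟩ := hy
      rw [PFun.comp_apply] at hx
      replace hx := (Part.mem_bind_iff (f := p x) (g := q)).mp hx
      obtain ⟨z, -, hz⟩ := hx
      exact ⟨z, hz⟩
    by_cases hqi : q = PFun.id ℕ
    · subst hqi
      rw [PFun.id_comp] at hr hne
      exact ihp hr hne
    · exact ihq hrq hqi

/-- If A generates the monoid IN∞ of cofinite partial isometries of ℕ, then A contains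
two distinct non-identity elements of the bicyclic submonoid C_ℕ (the elements of IN∞
whose domain is an interval [m,∞)): one with domain all of ℕ and one with range all
of ℕ. -/
theorem stmt_18 (A : Set (ℕ →. ℕ)) (hA : A ⊆ {f | CofIsoN f})
    (hgen : ∀ f, CofIsoN f → Gen A f) :
    ∃ a ∈ A, ∃ b ∈ A, a ≠ b ∧
      (∃ m : ℕ, a.Dom = {n | m ≤ n}) ∧ (∃ m : ℕ, b.Dom = {n | m ≤ n}) ∧
      a ≠ PFun.id ℕ ∧ b ≠ PFun.id ℕ ∧
      a.Dom = Set.univ ∧ b.ran = Set.univ := by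
  -- the shift α : n ↦ n + 1
  set α : ℕ →. ℕ := fun n => Part.some (n + 1) with hα
  have hαiso : CofIsoN α := by
    refine ⟨?_, ?_, ?_, ?_⟩
    · have : (PFun.Dom α)ᶜ = ∅ := by
        ext x; simp [PFun.Dom, hα]
      rw [this]; exact Set.finite_empty
    · apply Set.Finite.subset (Set.finite_singleton 0)
      intro y hy
      simp only [Set.mem_compl_iff, PFun.ran, Set.mem_setOf_eq, hα] at hy
      simp only [Set.mem_singleton_iff]
      by_contra h0
      exact hy ⟨y - 1, by simp [Part.mem_some_iff]; omega⟩
    · intro x y x' y' hx hy hxy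
      simp only [hα, Part.mem_some_iff] at hx hy
      omega
    · intro x y x' y' hx hy
      simp only [hα, Part.mem_some_iff] at hx hy
      subst hx; subst hy
      congr 1; push_cast; ring
  have hαdom : α.Dom = Set.univ := Set.eq_univ_of_forall fun x => trivial
  have hαne : α ≠ PFun.id ℕ := by
    intro h
    have := congrFun h 0
    simp only [hα, PFun.id] at this
    have : (1 : ℕ) = 0 := by
      have h1 : (1 : ℕ) ∈ Part.some (0 + 1) := by simp
      rw [this] at h1
      simpa using h1
    omega
  -- the partial shift β : n ↦ n - 1 with domain {n | 1 ≤ n}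
  set β : ℕ →. ℕ := fun n => ⟨1 ≤ n, fun _ => n - 1⟩ with hβ
  have hβmem : ∀ x y : ℕ, y ∈ β x ↔ 1 ≤ x ∧ x - 1 = y := by
    intro x y
    simp [hβ, Part.mem_mk_iff]
  have hβran : β.ran = Set.univ := by
    apply Set.eq_univ_of_forall
    intro y
    exact ⟨y + 1, (hβmem _ _).mpr ⟨by omega, by omega⟩⟩
  have hβiso : CofIsoN β := by
    refine ⟨?_, ?_, ?_, ?_⟩
    · apply Set.Finite.subset (Set.finite_singleton 0)
      intro x hx
      simp only [Set.mem_compl_iff, PFun.Dom, Set.mem_setOf_eq, hβ] at hx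
      simp only [Set.mem_singleton_iff]
      omega
    · rw [hβran]; simp
    · intro x y x' y' hx hy hxy
      rw [hβmem] at hx hy
      omega
    · intro x y x' y' hx hy
      rw [hβmem] at hx hy
      congr 1; omega
  have hβne : β ≠ PFun.id ℕ := by
    intro h
    have : (0 : ℕ) ∈ β 0 := by rw [h]; simp [PFun.id]
    rw [hβmem] at this
    omega
  obtain ⟨a, haA, hadom, hane⟩ := gen_dom (hgen α hαiso) hαdom hαne
  obtain ⟨b, hbA, hbran, hbne⟩ := gen_ran (hgen β hβiso) hβran hβne
  refine ⟨a, haA, b, hbA, ?_, ⟨0, by rw [hadom]; ext n; simp⟩, ran_univ_dom (hA hbA) hbran, hane, hbne,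
    hadom, hbran⟩
  intro hab
  subst hab
  exact hane (id_of (hA haA) hadom hbran)
end

section
/- The monoid IN∞ of cofinite partial isometries of ℕ contains no minimal generating set: for every generating set A of IN∞ there is a proper subset of A which still generates IN∞. -/
namespace NoMin

/-- translation up by j -/
def Tn (j : ℕ) : ℕ →. ℕ := fun x => Part.some (x + j)
/-- translation down by j -/
def Sn (j : ℕ) : ℕ →. ℕ := fun x => ⟨j ≤ x, fun _ => x - j⟩
/-- identity with one hole at n -/
def eps (n : ℕ) : ℕ →. ℕ := fun x => ⟨x ≠ n, fun _ => x⟩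
/-- partial identity on R -/
def idOn (R : Set ℕ) : ℕ →. ℕ := fun x => ⟨x ∈ R, fun _ => x⟩

@[simp] lemma mem_Tn {j x y : ℕ} : y ∈ Tn j x ↔ y = x + j := by
  simp [Tn, eq_comm]

@[simp] lemma mem_Sn {j x y : ℕ} : y ∈ Sn j x ↔ j ≤ x ∧ y = x - j := by
  constructor
  · rintro ⟨h, rfl⟩; exact ⟨h, rfl⟩
  · rintro ⟨h, rfl⟩; exact ⟨h, rfl⟩

@[simp] lemma mem_eps {n x y : ℕ} : y ∈ eps n x ↔ x ≠ n ∧ y = x := by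
  constructor
  · rintro ⟨h, rfl⟩; exact ⟨h, rfl⟩
  · rintro ⟨h, rfl⟩; exact ⟨h, rfl⟩

@[simp] lemma mem_idOn {R : Set ℕ} {x y : ℕ} : y ∈ idOn R x ↔ x ∈ R ∧ y = x := by
  constructor
  · rintro ⟨h, rfl⟩; exact ⟨h, rfl⟩
  · rintro ⟨h, rfl⟩; exact ⟨h, rfl⟩

lemma mem_comp {f g : ℕ →. ℕ} {x y : ℕ} :
    y ∈ (g.comp f) x ↔ ∃ z, z ∈ f x ∧ y ∈ g z := by
  simp [PFun.comp_apply, Part.mem_bind_iff]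
  exact Part.mem_bind_iff

lemma cof_Tn (j : ℕ) : CofIsoN (Tn j) := by
  refine ⟨?_, ?_, ?_, ?_⟩
  · convert Set.finite_empty
    ext x; simp [PFun.Dom, Tn]
  · apply Set.Finite.subset (Set.finite_Iio j)
    intro y hy
    simp only [Set.mem_compl_iff, PFun.ran, Set.mem_setOf_eq] at hy
    simp only [Set.mem_Iio]
    by_contra h
    exact hy ⟨y - j, by simp; omega⟩
  · intro x y x' y' hx hy he
    simp only [mem_Tn] at hx hy; omega
  · intro x y x' y' hx hy
    simp only [mem_Tn] at hx hy
    subst hx; subst hy; push_cast; ring_nf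

lemma cof_Sn (j : ℕ) : CofIsoN (Sn j) := by
  refine ⟨?_, ?_, ?_, ?_⟩
  · apply Set.Finite.subset (Set.finite_Iio j)
    intro x hx
    simp only [Set.mem_compl_iff, PFun.Dom, Set.mem_setOf_eq, Sn] at hx
    simpa [Set.mem_Iio] using hx
  · convert Set.finite_empty
    ext y
    simp only [Set.mem_compl_iff, PFun.ran, Set.mem_setOf_eq, Set.mem_empty_iff_false,
      iff_false, not_not, not_forall, not_exists]
    exact ⟨y + j, by simp⟩
  · intro x y x' y' hx hy he
    simp only [mem_Sn] at hx hy; omega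
  · intro x y x' y' hx hy
    simp only [mem_Sn] at hx hy
    obtain ⟨h1, rfl⟩ := hx; obtain ⟨h2, rfl⟩ := hy
    rw [Nat.cast_sub h1, Nat.cast_sub h2]; ring_nf

lemma cof_eps (n : ℕ) : CofIsoN (eps n) := by
  refine ⟨?_, ?_, ?_, ?_⟩
  · apply Set.Finite.subset (Set.finite_singleton n)
    intro x hx
    simp only [Set.mem_compl_iff, PFun.Dom, Set.mem_setOf_eq, eps, not_not] at hx
    simpa using hx
  · apply Set.Finite.subset (Set.finite_singleton n)
    intro y hy
    simp only [Set.mem_compl_iff, PFun.ran, Set.mem_setOf_eq] at hy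
    by_contra h
    simp only [Set.mem_singleton_iff] at h
    exact hy ⟨y, by simp [h]⟩
  · intro x y x' y' hx hy he
    simp only [mem_eps] at hx hy; omega
  · intro x y x' y' hx hy
    simp only [mem_eps] at hx hy
    obtain ⟨_, rfl⟩ := hx; obtain ⟨_, rfl⟩ := hy; rfl

lemma cof_comp {f g : ℕ →. ℕ} (hf : CofIsoN f) (hg : CofIsoN g) :
    CofIsoN (g.comp f) := by
  obtain ⟨hfd, hfr, hfi, hfm⟩ := hf
  obtain ⟨hgd, hgr, hgi, hgm⟩ := hg
  refine ⟨?_, ?_, ?_, ?_⟩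
  · have hfin : (f.Domᶜ ∪ ⋃ y ∈ g.Domᶜ, {x | y ∈ f x}).Finite :=
      Set.Finite.union hfd (Set.Finite.biUnion hgd (fun y _ =>
        Set.Subsingleton.finite (fun x1 h1 x2 h2 => hfi h1 h2 rfl)))
    apply Set.Finite.subset hfin
    intro x hx
    simp only [Set.mem_compl_iff, PFun.Dom, Set.mem_setOf_eq] at hx
    by_cases hd : (f x).Dom
    · have hy : (f x).get hd ∈ f x := Part.get_mem hd
      right
      refine Set.mem_biUnion ?_ (by exact hy : x ∈ {x' | (f x).get hd ∈ f x'})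
      simp only [Set.mem_compl_iff, PFun.Dom, Set.mem_setOf_eq]
      intro hgd'
      exact hx (Part.dom_iff_mem.2 ⟨_, mem_comp.2 ⟨_, hy, Part.get_mem hgd'⟩⟩)
    · left; exact hd
  · have hfin : (g.ranᶜ ∪ ⋃ z ∈ f.ranᶜ, {y | y ∈ g z}).Finite :=
      Set.Finite.union hgr (Set.Finite.biUnion hfr (fun z _ =>
        Set.Subsingleton.finite (fun y1 h1 y2 h2 => Part.mem_unique h1 h2)))
    apply Set.Finite.subset hfin
    intro y hy
    simp only [Set.mem_compl_iff, PFun.ran, Set.mem_setOf_eq] at hy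
    by_cases hr : ∃ z, y ∈ g z
    · obtain ⟨z, hz⟩ := hr
      right
      refine Set.mem_biUnion ?_ (by exact hz : y ∈ {y' | y' ∈ g z})
      simp only [Set.mem_compl_iff, PFun.ran, Set.mem_setOf_eq]
      rintro ⟨x, hx⟩
      exact hy ⟨x, mem_comp.2 ⟨z, hx, hz⟩⟩
    · left; simpa [PFun.ran] using hr
  · intro x y x' y' hx hy he
    obtain ⟨u, hu, hu'⟩ := mem_comp.1 hx
    obtain ⟨v, hv, hv'⟩ := mem_comp.1 hy
    exact hfi hu hv (hgi hu' hv' he)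
  · intro x y x' y' hx hy
    obtain ⟨u, hu, hu'⟩ := mem_comp.1 hx
    obtain ⟨v, hv, hv'⟩ := mem_comp.1 hy
    rw [hgm hu' hv', hfm hu hv]



/-- cofinite sets of naturals are unbounded -/
lemma unbounded_of_cof {D : Set ℕ} (hD : Dᶜ.Finite) (m : ℕ) : ∃ z ∈ D, m < z := by
  by_contra h
  push_neg at h
  have hfin : D.Finite := Set.Finite.subset (Set.finite_Iic m) (fun z hz => h z hz)
  have : (Set.univ : Set ℕ).Finite := by
    have := hfin.union hD
    simpa using this
  exact Set.infinite_univ this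

/-- rigidity: every cofinite partial isometry is a translation on its domain -/
lemma shift_exists {f : ℕ →. ℕ} (hf : CofIsoN f) :
    ∃ c : ℤ, ∀ x y, y ∈ f x → (y : ℤ) = x + c := by
  obtain ⟨hfd, hfr, hfi, hfm⟩ := hf
  -- step: far points have the same offset
  have step : ∀ x y z w : ℕ, y ∈ f x → w ∈ f z → x + y < z → (w : ℤ) - z = (y : ℤ) - x := by
    intro x y z w hx hz hlt
    have := hfm hz hx
    have h1 : |(w : ℤ) - y| = |(z : ℤ) - x| := this
    have hw : (0:ℤ) ≤ w := Int.ofNat_nonneg w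
    have hlt' : (x : ℤ) + y < z := by exact_mod_cast hlt
    rcases abs_cases ((w : ℤ) - y) with ⟨h2, _⟩ | ⟨h2, _⟩ <;>
      rcases abs_cases ((z : ℤ) - x) with ⟨h3, _⟩ | ⟨h3, _⟩ <;> omega
  obtain ⟨x₀, hx₀, _⟩ := unbounded_of_cof hfd 0
  have hx₀' : (f x₀).Dom := hx₀
  set y₀ := (f x₀).get hx₀'
  have hy₀ : y₀ ∈ f x₀ := Part.get_mem hx₀'
  refine ⟨(y₀ : ℤ) - x₀, ?_⟩
  intro x y hxy
  obtain ⟨z, hz, hzlt⟩ := unbounded_of_cof hfd (max (x + y) (x₀ + y₀))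
  have hz' : (f z).Dom := hz
  have hw : (f z).get hz' ∈ f z := Part.get_mem hz'
  have e1 := step x y z _ hxy hw (lt_of_le_of_lt (le_max_left _ _) hzlt)
  have e2 := step x₀ y₀ z _ hy₀ hw (lt_of_le_of_lt (le_max_right _ _) hzlt)
  omega

/-- common bound above all domain-holes of a CofIsoN map -/
lemma hole_bound {f : ℕ →. ℕ} (hf : CofIsoN f) : ∃ N, ∀ h, N ≤ h → h ∈ f.Dom := by
  obtain ⟨N, hN⟩ := Set.Finite.bddAbove hf.1
  refine ⟨N + 1, fun h hh => ?_⟩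
  by_contra hc
  have := hN (by exact hc : h ∈ f.Domᶜ)
  omega

section GenLemmas

lemma gen_mono {A B : Set (ℕ →. ℕ)} (hAB : A ⊆ B) {f} (h : Gen A f) : Gen B f := by
  induction h with
  | one => exact Gen.one
  | mem hf => exact Gen.mem (hAB hf)
  | mul _ _ ih1 ih2 => exact Gen.mul ih1 ih2

lemma gen_support {A : Set (ℕ →. ℕ)} {f} (h : Gen A f) :
    ∃ C : Set (ℕ →. ℕ), C.Finite ∧ C ⊆ A ∧ Gen C f := by
  induction h with
  | one => exact ⟨∅, Set.finite_empty, Set.empty_subset _, Gen.one⟩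
  | @mem f hf => exact ⟨{f}, Set.finite_singleton _, by simpa using hf, Gen.mem rfl⟩
  | mul _ _ ih1 ih2 =>
    obtain ⟨C1, hC1f, hC1, hg1⟩ := ih1
    obtain ⟨C2, hC2f, hC2, hg2⟩ := ih2
    exact ⟨C1 ∪ C2, hC1f.union hC2f, Set.union_subset hC1 hC2,
      Gen.mul (gen_mono Set.subset_union_left hg1) (gen_mono Set.subset_union_right hg2)⟩

/-- composition of a word of maps, first element applied first -/
def wcomp : List (ℕ →. ℕ) → (ℕ →. ℕ)
  | [] => PFun.id ℕ
  | g :: L => (wcomp L).comp g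

lemma wcomp_append (L₁ L₂ : List (ℕ →. ℕ)) :
    wcomp (L₁ ++ L₂) = (wcomp L₂).comp (wcomp L₁) := by
  induction L₁ with
  | nil => simp [wcomp, PFun.comp_id]
  | cons g L₁ ih =>
    show (wcomp (L₁ ++ L₂)).comp g = (wcomp L₂).comp ((wcomp L₁).comp g)
    rw [ih, PFun.comp_assoc]

lemma gen_flat {A : Set (ℕ →. ℕ)} {f} (h : Gen A f) :
    ∃ L : List (ℕ →. ℕ), (∀ g ∈ L, g ∈ A) ∧ f = wcomp L := by
  induction h with
  | one => exact ⟨[], by simp, rfl⟩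
  | @mem f hf => exact ⟨[f], by simpa using hf, by simp [wcomp, PFun.id_comp]⟩
  | mul _ _ ih1 ih2 =>
    obtain ⟨L1, hL1, rfl⟩ := ih1
    obtain ⟨L2, hL2, rfl⟩ := ih2
    refine ⟨L1 ++ L2, ?_, (wcomp_append L1 L2).symm⟩
    intro g hg
    rcases List.mem_append.1 hg with h | h
    exacts [hL1 g h, hL2 g h]

lemma Tn_zero : Tn 0 = PFun.id ℕ := by
  apply PFun.ext; intro x y; simp [PFun.id, eq_comm]

lemma Tn_succ (j : ℕ) : Tn (j + 1) = (Tn 1).comp (Tn j) := by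
  apply PFun.ext; intro x y
  simp only [mem_Tn, mem_comp]
  constructor
  · rintro rfl; exact ⟨x + j, rfl, by ring⟩
  · rintro ⟨z, rfl, rfl⟩; ring

lemma Sn_zero : Sn 0 = PFun.id ℕ := by
  apply PFun.ext; intro x y; simp [PFun.id, eq_comm]

lemma Sn_succ (j : ℕ) : Sn (j + 1) = (Sn 1).comp (Sn j) := by
  apply PFun.ext; intro x y
  simp only [mem_Sn, mem_comp]
  constructor
  · rintro ⟨h, rfl⟩; exact ⟨x - j, ⟨by omega, rfl⟩, by omega, by omega⟩
  · rintro ⟨z, ⟨h1, rfl⟩, h2, rfl⟩; omega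

lemma gen_Tn {A : Set (ℕ →. ℕ)} (hT : Gen A (Tn 1)) : ∀ j, Gen A (Tn j) := by
  intro j
  induction j with
  | zero => rw [Tn_zero]; exact Gen.one
  | succ j ih => rw [Tn_succ]; exact Gen.mul ih hT

lemma gen_Sn {A : Set (ℕ →. ℕ)} (hS : Gen A (Sn 1)) : ∀ j, Gen A (Sn j) := by
  intro j
  induction j with
  | zero => rw [Sn_zero]; exact Gen.one
  | succ j ih => rw [Sn_succ]; exact Gen.mul ih hS

/-- conjugation: a hole high up can be moved down -/
lemma eps_conj (h j : ℕ) : eps h = (Sn j).comp ((eps (h + j)).comp (Tn j)) := by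
  apply PFun.ext; intro x y
  simp only [mem_eps, mem_comp, mem_Tn, mem_Sn]
  constructor
  · rintro ⟨hx, he⟩
    exact ⟨x + j, ⟨x + j, rfl, by omega, rfl⟩, by omega, by omega⟩
  · rintro ⟨z, ⟨w, hw1, hw2, hw3⟩, h2, h3⟩
    constructor <;> omega

lemma gen_eps {A : Set (ℕ →. ℕ)} (hT : Gen A (Tn 1)) (hS : Gen A (Sn 1))
    (hE : ∀ m, ∃ n, m ≤ n ∧ Gen A (eps n)) : ∀ h, Gen A (eps h) := by
  intro h
  obtain ⟨n, hn, hgn⟩ := hE h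
  have : eps h = (Sn (n - h)).comp ((eps (h + (n - h))).comp (Tn (n - h))) := eps_conj h (n - h)
  rw [Nat.add_sub_cancel' hn] at this
  rw [this]
  exact Gen.mul (Gen.mul (gen_Tn hT _) hgn) (gen_Sn hS _)

lemma gen_idOn_finset {A : Set (ℕ →. ℕ)} (hT : Gen A (Tn 1)) (hS : Gen A (Sn 1))
    (hE : ∀ m, ∃ n, m ≤ n ∧ Gen A (eps n)) :
    ∀ s : Finset ℕ, Gen A (idOn (↑s)ᶜ) := by
  intro s
  induction s using Finset.induction_on with
  | empty =>
    have : idOn ((↑(∅ : Finset ℕ))ᶜ) = PFun.id ℕ := by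
      apply PFun.ext; intro x y; simp [PFun.id, eq_comm]
    rw [this]; exact Gen.one
  | @insert a s ha ih =>
    have : idOn ((↑(insert a s : Finset ℕ))ᶜ) = (eps a).comp (idOn (↑s)ᶜ) := by
      apply PFun.ext; intro x y
      simp only [mem_idOn, mem_comp, mem_eps, Set.mem_compl_iff, Finset.coe_insert,
        Set.mem_insert_iff]
      constructor
      · rintro ⟨hx, he⟩
        exact ⟨x, ⟨fun h => hx (Or.inr h), rfl⟩, fun h => hx (Or.inl h), he⟩
      · rintro ⟨z, ⟨h1, he1⟩, h2, he2⟩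
        subst he1; subst he2
        exact ⟨by tauto, rfl⟩
    rw [this]
    exact Gen.mul ih (gen_eps hT hS hE a)

end GenLemmas

/-- classification of a cofinite partial isometry whose domain contains ℕ \ {n} -/
lemma class1 {p : ℕ →. ℕ} (hp : CofIsoN p) {n : ℕ} (hn : 1 ≤ n)
    (hdom : ∀ x, x ≠ n → x ∈ p.Dom) :
    (∃ s, p = Tn s) ∨ (n ∉ p.Dom ∧ ∃ t, eps n = (Sn t).comp p) := by
  obtain ⟨c, hc⟩ := shift_exists hp
  have h0 : (0 : ℕ) ∈ p.Dom := hdom 0 (by omega)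
  have hv0 : (p 0).get h0 ∈ p 0 := Part.get_mem h0
  have hc0 : ((p 0).get h0 : ℤ) = 0 + c := hc 0 _ hv0
  have hcpos : 0 ≤ c := by
    have : (0:ℤ) ≤ ((p 0).get h0 : ℤ) := Int.ofNat_nonneg _
    omega
  set t : ℕ := c.toNat with ht
  have hct : (t : ℤ) = c := Int.toNat_of_nonneg hcpos
  have hval : ∀ x, x ∈ p.Dom → x + t ∈ p x := by
    intro x hx
    have hm : (p x).get hx ∈ p x := Part.get_mem hx
    have := hc x _ hm
    have : (p x).get hx = x + t := by omega
    rwa [this] at hm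
  by_cases hnd : n ∈ p.Dom
  · left
    refine ⟨t, PFun.ext fun x y => ?_⟩
    have hx : x ∈ p.Dom := by
      by_cases hxn : x = n
      · subst hxn; exact hnd
      · exact hdom x hxn
    simp only [mem_Tn]
    constructor
    · intro hy
      have := hc x y hy
      omega
    · rintro rfl
      exact hval x hx
  · right
    refine ⟨hnd, t, PFun.ext fun x y => ?_⟩
    simp only [mem_eps, mem_comp, mem_Sn]
    constructor
    · rintro ⟨hxn, he⟩
      exact ⟨x + t, hval x (hdom x hxn), by omega, by omega⟩
    · rintro ⟨z, hz, h2, h3⟩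
      have hxd : x ∈ p.Dom := Part.dom_iff_mem.2 ⟨z, hz⟩
      have hxn : x ≠ n := fun h => hnd (h ▸ hxd)
      have := hc x z hz
      constructor
      · exact hxn
      · omega

/-- extraction: any word for `eps n` contains a letter with a hole at height ≥ n,
and that letter conjugates back to `eps n`. -/
lemma ext_aux {A : Set (ℕ →. ℕ)} (hA : A ⊆ {f | CofIsoN f}) :
    ∀ L : List (ℕ →. ℕ), (∀ g ∈ L, g ∈ A) → ∀ n s, 1 ≤ n →
    (wcomp L).comp (Tn s) = eps n →
    ∃ b ∈ A, (∃ h, n ≤ h ∧ h ∉ b.Dom) ∧ ∃ s' t', eps n = (Sn t').comp (b.comp (Tn s')) := by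
  intro L
  induction L with
  | nil =>
    intro _ n s hn heq
    exfalso
    rw [show wcomp [] = PFun.id ℕ from rfl, PFun.id_comp] at heq
    have h1 : n + s ∈ Tn s n := by simp
    rw [heq] at h1
    simp at h1
  | cons g L ih =>
    intro hL n s hn heq
    have hg : g ∈ A := hL g List.mem_cons_self
    have heq' : (wcomp L).comp (g.comp (Tn s)) = eps n := by
      rw [← PFun.comp_assoc]
      exact heq
    set r := g.comp (Tn s) with hr
    have hrc : CofIsoN r := cof_comp (cof_Tn s) (hA hg)
    have hdom : ∀ x, x ≠ n → x ∈ r.Dom := by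
      intro x hx
      have : x ∈ (eps n).Dom := hx
      rw [← heq'] at this
      obtain ⟨y, hy⟩ := Part.dom_iff_mem.1 this
      obtain ⟨z, hz, _⟩ := mem_comp.1 hy
      exact Part.dom_iff_mem.2 ⟨z, hz⟩
    rcases class1 hrc hn hdom with ⟨s₂, hs₂⟩ | ⟨hnd, t, hconj⟩
    · rw [hs₂] at heq'
      exact ih (fun g' hg' => hL g' (List.mem_cons_of_mem _ hg')) n s₂ hn heq'
    · refine ⟨g, hg, ⟨n + s, Nat.le_add_right n s, ?_⟩, s, t, hconj⟩
      intro hd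
      apply hnd
      have : n + s ∈ Tn s n := by simp
      obtain ⟨y, hy⟩ := Part.dom_iff_mem.1 hd
      exact Part.dom_iff_mem.2 ⟨y, mem_comp.2 ⟨n + s, this, hy⟩⟩

lemma ext_main {A : Set (ℕ →. ℕ)} (hA : A ⊆ {f | CofIsoN f}) {n : ℕ} (hn : 1 ≤ n)
    (h : Gen A (eps n)) :
    ∃ b ∈ A, (∃ h, n ≤ h ∧ h ∉ b.Dom) ∧ ∃ s' t', eps n = (Sn t').comp (b.comp (Tn s')) := by
  obtain ⟨L, hL, hLe⟩ := gen_flat h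
  refine ext_aux hA L hL n 0 hn ?_
  rw [Tn_zero, PFun.comp_id, ← hLe]

/-- the main generation lemma -/
lemma main_gen {B : Set (ℕ →. ℕ)} (hT : Gen B (Tn 1)) (hS : Gen B (Sn 1))
    (hE : ∀ m, ∃ n, m ≤ n ∧ Gen B (eps n)) :
    ∀ f, CofIsoN f → Gen B f := by
  intro f hf
  obtain ⟨c, hc⟩ := shift_exists hf
  have hidOn : Gen B (idOn f.ran) := by
    have hfin : f.ranᶜ.Finite := hf.2.1
    have : f.ran = (↑hfin.toFinset)ᶜ := by
      rw [Set.Finite.coe_toFinset, compl_compl]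
    rw [this]
    exact gen_idOn_finset hT hS hE hfin.toFinset
  rcases le_or_gt 0 c with hcpos | hcneg
  · set j : ℕ := c.toNat with hj
    have hcj : (j : ℤ) = c := Int.toNat_of_nonneg hcpos
    have hfe : f = (idOn f.ran).comp (Tn j) := by
      apply PFun.ext; intro x y
      simp only [mem_comp, mem_Tn, mem_idOn]
      constructor
      · intro hy
        have := hc x y hy
        have hyx : y = x + j := by omega
        exact ⟨x + j, rfl, ⟨x, hyx ▸ hy⟩, hyx⟩
      · rintro ⟨z, rfl, ⟨x', hx'⟩, rfl⟩
        have := hc x' _ hx'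
        have hxx : x' = x := by omega
        rwa [hxx] at hx'
    rw [hfe]
    exact Gen.mul (gen_Tn hT j) hidOn
  · set j : ℕ := (-c).toNat with hj
    have hcj : (j : ℤ) = -c := Int.toNat_of_nonneg (by omega)
    have hfe : f = (idOn f.ran).comp (Sn j) := by
      apply PFun.ext; intro x y
      simp only [mem_comp, mem_Sn, mem_idOn]
      constructor
      · intro hy
        have := hc x y hy
        have hy0 : (0:ℤ) ≤ y := Int.ofNat_nonneg y
        have hjx : j ≤ x := by omega
        have hyx : y = x - j := by omega
        exact ⟨y, ⟨hjx, hyx.symm ▸ rfl⟩, ⟨x, hy⟩, rfl⟩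
      · rintro ⟨z, ⟨hjx, rfl⟩, ⟨x', hx'⟩, rfl⟩
        have := hc x' _ hx'
        have hxx : x' = x := by omega
        rwa [hxx] at hx'
    rw [hfe]
    exact Gen.mul (gen_Sn hS j) hidOn

end NoMin

/-- The monoid IN∞ of cofinite partial isometries of ℕ has no minimal generating set:
every generating set A of IN∞ has a proper subset which still generates IN∞. -/
theorem stmt_19 (A : Set (ℕ →. ℕ)) (hA : A ⊆ {f | CofIsoN f})
    (hgen : ∀ f, CofIsoN f → Gen A f) :
    ∃ B : Set (ℕ →. ℕ), B ⊂ A ∧ ∀ f, CofIsoN f → Gen B f := by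
  classical
  open NoMin in
  -- finite supports for derivations of Tn 1 and Sn 1
  obtain ⟨CT, hCTfin, hCTsub, hCT⟩ := NoMin.gen_support (hgen _ (NoMin.cof_Tn 1))
  obtain ⟨CS, hCSfin, hCSsub, hCS⟩ := NoMin.gen_support (hgen _ (NoMin.cof_Sn 1))
  -- a common bound for the holes of all elements of CT ∪ CS
  have hFfin : ((⋃ g ∈ CT ∪ CS, g.Domᶜ) : Set ℕ).Finite :=
    Set.Finite.biUnion (hCTfin.union hCSfin)
      (fun g hg => (hA ((Set.union_subset hCTsub hCSsub) hg)).1)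
  obtain ⟨NF, hNF⟩ := hFfin.bddAbove
  -- pick the element to remove: a letter with a very high hole
  obtain ⟨a, haA, ⟨h₀, hh₀, hh₀d⟩, _⟩ :=
    NoMin.ext_main hA (n := NF + 1) (by omega) (hgen _ (NoMin.cof_eps (NF + 1)))
  -- a is not in CT ∪ CS
  have haF : a ∉ CT ∪ CS := by
    intro hmem
    have : h₀ ∈ ⋃ g ∈ CT ∪ CS, g.Domᶜ := Set.mem_biUnion hmem hh₀d
    have := hNF this
    omega
  set B := A \ {a} with hB
  have hBsub : B ⊆ A := Set.diff_subset
  have hTB : Gen B (NoMin.Tn 1) := NoMin.gen_mono (fun g hg =>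
    (Set.mem_diff g).2 ⟨hCTsub hg, by simp; rintro rfl; exact haF (Or.inl hg)⟩) hCT
  have hSB : Gen B (NoMin.Sn 1) := NoMin.gen_mono (fun g hg =>
    (Set.mem_diff g).2 ⟨hCSsub hg, by simp; rintro rfl; exact haF (Or.inr hg)⟩) hCS
  -- bound for holes of a
  obtain ⟨Na, hNa⟩ := NoMin.hole_bound (hA haA)
  have hEB : ∀ m, ∃ n, m ≤ n ∧ Gen B (NoMin.eps n) := by
    intro m
    set n := max m Na + 1 with hn
    obtain ⟨b, hbA, ⟨h₁, hh₁, hh₁d⟩, s', t', hconj⟩ :=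
      NoMin.ext_main hA (n := n) (by omega) (hgen _ (NoMin.cof_eps n))
    have hba : b ≠ a := by
      intro h
      subst h
      exact hh₁d (hNa h₁ (by omega))
    refine ⟨n, by omega, ?_⟩
    rw [hconj]
    exact Gen.mul (Gen.mul (NoMin.gen_Tn hTB s') (Gen.mem ((Set.mem_diff b).2 ⟨hbA, by simpa using hba⟩)))
      (NoMin.gen_Sn hSB t')
  refine ⟨B, ⟨hBsub, fun hAB => ?_⟩, NoMin.main_gen hTB hSB hEB⟩
  · exact (hAB haA).2 rfl
end
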